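/- arXiv:2402.05038 — 12 statements merged into one kernel-verified Lean document; each statement's English description precedes it below -/
import Mathlib

section
/- Let $J$ be a countable (or finite) index set, let $1<p<+\infty$ with conjugate exponent $p^*=p/(p-1)$, and let $\mu=(\mu_j)_{j\in J}$ be a family of nonzero scalars. Then the infimum, over all $x\in\ell^1(J)$ with $\sum_{j\in J}|x_j|=1$, of $(\sum_{j\in J}|x_j\mu_j|^p)^{1/p}$ equals $(\sum_{j\in J}|\mu_j|^{-p^*})^{-1/p^*}$, with the convention $\infty^{-1}=0$. -/
open scoped ENNReal NNReal

open MeasureTheory in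
/-- Hölder's inequality for `tsum` in `ℝ≥0∞`. -/
lemma tsum_mul_le_Lp_mul_Lq_aux {J : Type*} (f g : J → ℝ≥0∞) {p q : ℝ}
    (hpq : p.HolderConjugate q) :
    (∑' j, f j * g j) ≤ (∑' j, f j ^ p) ^ (1 / p) * (∑' j, g j ^ q) ^ (1 / q) := by
  letI : MeasurableSpace J := ⊤
  haveI : MeasurableSingletonClass J := ⟨fun _ => trivial⟩
  have hf' : Measurable f := fun s _ => trivial
  have hg' : Measurable g := fun s _ => trivial
  have hf : AEMeasurable f (Measure.count) := hf'.aemeasurable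
  have hg : AEMeasurable g (Measure.count) := hg'.aemeasurable
  simpa [lintegral_count] using ENNReal.lintegral_mul_le_Lp_mul_Lq Measure.count hpq hf hg

/-- The value attained by a normalized "extremal" weight. -/
lemma mem_aux {𝕜 J : Type*} [RCLike 𝕜] [Countable J] (μ : J → 𝕜) (hμ : ∀ j, μ j ≠ 0)
    {p q : ℝ} (hpq : p.HolderConjugate q) (w : J → ℝ≥0) (t : ℝ≥0) (ht : t ≠ 0)
    (hw : ∀ j, w j = 0 ∨ (w j : ℝ≥0∞) = (‖μ j‖₊ : ℝ≥0∞) ^ (-q) / t)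
    (hsum : (∑' j, ((w j : ℝ≥0∞))) = 1) :
    ((t : ℝ≥0∞)) ^ (-(1/q)) ∈ {s : ℝ≥0∞ | ∃ x : J → 𝕜,
        (∑' j, (‖x j‖₊ : ℝ≥0∞)) = 1 ∧
        s = (∑' j, (‖x j * μ j‖₊ : ℝ≥0∞) ^ p) ^ (1 / p)} := by
  have hp0 : (0:ℝ) < p := hpq.pos
  have hq0 : (0:ℝ) < q := hpq.symm.pos
  have ht0 : (t : ℝ≥0∞) ≠ 0 := by exact_mod_cast ht
  have httop : (t : ℝ≥0∞) ≠ ⊤ := ENNReal.coe_ne_top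
  refine ⟨fun j => ((w j : ℝ) : 𝕜), ?_, ?_⟩
  · have hn : ∀ j, ‖(((w j : ℝ)) : 𝕜)‖₊ = w j := fun j =>
      NNReal.coe_injective (by
        simp [coe_nnnorm, RCLike.norm_ofReal, abs_of_nonneg (w j).coe_nonneg])
    simpa [hn] using hsum
  · have e3 : (1 - p) * (1/p) = -(1/q) := by
      have h := hpq.mul_eq_add
      have hp' : p ≠ 0 := ne_of_gt hpq.pos
      have hq' : q ≠ 0 := ne_of_gt hpq.symm.pos
      field_simp
      linarith
    symm
    have key : ∀ j, (‖(((w j : ℝ)) : 𝕜) * μ j‖₊ : ℝ≥0∞) ^ p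
        = (w j : ℝ≥0∞) * (t : ℝ≥0∞) ^ (1 - p) := by
      intro j
      have hn : ‖(((w j : ℝ)) : 𝕜)‖₊ = w j :=
        NNReal.coe_injective (by
          simp [coe_nnnorm, RCLike.norm_ofReal, abs_of_nonneg (w j).coe_nonneg])
      have hm0 : (‖μ j‖₊ : ℝ≥0∞) ≠ 0 := by
        simpa using (nnnorm_ne_zero_iff.2 (hμ j))
      have hmtop : (‖μ j‖₊ : ℝ≥0∞) ≠ ⊤ := ENNReal.coe_ne_top
      rw [nnnorm_mul, hn, ENNReal.coe_mul]
      rcases hw j with h0 | hwj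
      · simp [h0, ENNReal.zero_rpow_of_pos hp0]
      · rw [hwj]
        set m : ℝ≥0∞ := (‖μ j‖₊ : ℝ≥0∞) with hm
        have hstep : m ^ (-q) / ↑t * m = m ^ (1 - q) * (↑t)⁻¹ := by
          rw [div_eq_mul_inv, mul_right_comm, show (1:ℝ) - q = -q + 1 by ring,
            ENNReal.rpow_add _ _ hm0 hmtop, ENNReal.rpow_one]
        rw [hstep, ENNReal.mul_rpow_of_ne_top (by
            simp [ENNReal.rpow_eq_top_iff, hm0, hmtop]) (by
            simp [httop, ht0]) p]
        rw [← ENNReal.rpow_mul, ← ENNReal.rpow_neg_one (↑t : ℝ≥0∞), ← ENNReal.rpow_mul]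
        have e1 : (1 - q) * p = -q := by
          linear_combination -hpq.mul_eq_add
        have e2 : m ^ (-q) = m ^ (-q) / ↑t * ↑t := by
          rw [div_eq_mul_inv, mul_assoc, ENNReal.inv_mul_cancel ht0 httop, mul_one]
        rw [e1, neg_one_mul]
        rw [show m ^ (-q) * (↑t:ℝ≥0∞) ^ (-p) = (m ^ (-q) / ↑t * ↑t) * (↑t:ℝ≥0∞) ^ (-p) by
          rw [← e2]]
        rw [mul_assoc, show (↑t:ℝ≥0∞) * (↑t:ℝ≥0∞) ^ (-p) = (↑t:ℝ≥0∞) ^ (1 - p) by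
          rw [show (1:ℝ) - p = 1 + -p by ring, ENNReal.rpow_add _ _ ht0 httop,
            ENNReal.rpow_one]]
    calc (∑' j, (‖(((w j : ℝ)) : 𝕜) * μ j‖₊ : ℝ≥0∞) ^ p) ^ (1/p)
        = ((∑' j, (w j : ℝ≥0∞)) * (t : ℝ≥0∞) ^ (1 - p)) ^ (1/p) := by
          rw [← ENNReal.tsum_mul_right]; exact congrArg (· ^ (1/p)) (tsum_congr key)
      _ = ((t : ℝ≥0∞) ^ (1 - p)) ^ (1/p) := by rw [hsum, one_mul]
      _ = (t : ℝ≥0∞) ^ (-(1/q)) := by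
          rw [← ENNReal.rpow_mul, e3]

/-- Lemma 4.2 of Grosse-Erdmann–Papathanasiou, second identity:
for `1 < p < ∞` with conjugate exponent `p* = p/(p-1)`, the infimum of
`(∑ |x_j μ_j|^p)^(1/p)` over `x` with `∑ |x_j| = 1` equals
`(∑ |μ_j|^{-p*})^{-1/p*}` (with the convention `∞⁻¹ = 0`, which is built into
`ENNReal.rpow` with a negative exponent). -/
theorem stmt1 {𝕜 J : Type*} [RCLike 𝕜] [Countable J] (μ : J → 𝕜) (hμ : ∀ j, μ j ≠ 0)
    (p : ℝ) (hp : 1 < p) :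
    sInf {s : ℝ≥0∞ | ∃ x : J → 𝕜,
        (∑' j, (‖x j‖₊ : ℝ≥0∞)) = 1 ∧
        s = (∑' j, (‖x j * μ j‖₊ : ℝ≥0∞) ^ p) ^ (1 / p)}
      = (∑' j, (‖μ j‖₊ : ℝ≥0∞) ^ (-(p / (p - 1)))) ^ (-(1 / (p / (p - 1)))) := by
  classical
  set q : ℝ := p / (p - 1) with hqdef
  have hpq : p.HolderConjugate q := (Real.holderConjugate_iff_eq_conjExponent hp).2 rfl
  have hp0 : (0:ℝ) < p := hpq.pos
  have hq0 : (0:ℝ) < q := hpq.symm.pos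
  set A : Set ℝ≥0∞ := {s : ℝ≥0∞ | ∃ x : J → 𝕜,
      (∑' j, (‖x j‖₊ : ℝ≥0∞)) = 1 ∧
      s = (∑' j, (‖x j * μ j‖₊ : ℝ≥0∞) ^ p) ^ (1 / p)} with hA
  set S : ℝ≥0∞ := ∑' j, (‖μ j‖₊ : ℝ≥0∞) ^ (-q) with hS
  have hm0 : ∀ j, (‖μ j‖₊ : ℝ≥0∞) ≠ 0 := fun j => by
    simpa using (nnnorm_ne_zero_iff.2 (hμ j))
  have hmtop : ∀ j, (‖μ j‖₊ : ℝ≥0∞) ≠ ⊤ := fun _ => ENNReal.coe_ne_top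
  rcases isEmpty_or_nonempty J with hJ | hJ
  · have hAe : A = ∅ := by
      ext s; simp only [hA, Set.mem_setOf_eq, Set.mem_empty_iff_false, iff_false]
      rintro ⟨x, hx1, -⟩
      simp [tsum_empty] at hx1
    have hS0 : S = 0 := by simp [hS, tsum_empty]
    rw [hAe, sInf_empty, hS0, ENNReal.zero_rpow_of_neg (neg_lt_zero.2 (by positivity))]
  · have hSpos : S ≠ 0 := by
      obtain ⟨j0⟩ := hJ
      intro h
      have : (‖μ j0‖₊ : ℝ≥0∞) ^ (-q) ≤ S := ENNReal.le_tsum j0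
      rw [h, le_zero_iff] at this
      exact (ENNReal.rpow_pos (pos_iff_ne_zero.2 (hm0 j0)) (hmtop j0)).ne' this
    refine le_antisymm ?_ (le_sInf ?_)
    · -- sInf A ≤ S ^ (-(1/q))
      rcases eq_or_ne S ⊤ with hStop | hStop
      · rw [hStop, ENNReal.top_rpow_of_neg (neg_lt_zero.2 (by positivity))]
        refine ENNReal.le_of_forall_pos_le_add fun ε hε _ => ?_
        rw [zero_add]
        -- find a finite set with large partial sum
        have hεtop : ((ε:ℝ≥0∞)) ^ (-q) < ⊤ := by
          rw [lt_top_iff_ne_top]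
          simp [ENNReal.rpow_eq_top_iff, hε.ne']
        have hC : (max 1 ((ε:ℝ≥0∞) ^ (-q))) < S := by
          rw [hStop]
          exact max_lt (lt_top_iff_ne_top.2 ENNReal.one_ne_top) hεtop
        rw [hS, ENNReal.tsum_eq_iSup_sum] at hC
        obtain ⟨F, hF⟩ := lt_iSup_iff.1 hC
        set T : ℝ≥0 := ∑ j ∈ F, ‖μ j‖₊ ^ (-q) with hT
        have hTcoe : ((T : ℝ≥0∞)) = ∑ j ∈ F, (‖μ j‖₊ : ℝ≥0∞) ^ (-q) := by
          rw [hT, ENNReal.coe_finset_sum]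
          exact Finset.sum_congr rfl fun j _ =>
            ENNReal.coe_rpow_of_ne_zero (nnnorm_ne_zero_iff.2 (hμ j)) _
        have hCT : max 1 ((ε:ℝ≥0∞) ^ (-q)) < (T : ℝ≥0∞) := by rw [hTcoe]; exact hF
        have hT0 : T ≠ 0 := by
          intro h
          rw [h] at hCT
          simp at hCT
        have hT0' : (T : ℝ≥0∞) ≠ 0 := by exact_mod_cast hT0
        set w : J → ℝ≥0 := fun j => if j ∈ F then ‖μ j‖₊ ^ (-q) / T else 0 with hwdef
        have hmem := mem_aux μ hμ hpq w T hT0 (fun j => by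
          by_cases hj : j ∈ F
          · right
            simp only [hwdef, if_pos hj]
            rw [ENNReal.coe_div hT0, ENNReal.coe_rpow_of_ne_zero (nnnorm_ne_zero_iff.2 (hμ j))]
          · left; simp [hwdef, hj]) (by
          rw [tsum_eq_sum (s := F) (fun j hj => by simp [hwdef, hj])]
          have : ∀ j ∈ F, ((w j : ℝ≥0∞)) = (‖μ j‖₊ : ℝ≥0∞) ^ (-q) * (T : ℝ≥0∞)⁻¹ := by
            intro j hj
            simp only [hwdef, if_pos hj]
            rw [ENNReal.coe_div hT0, ENNReal.coe_rpow_of_ne_zero (nnnorm_ne_zero_iff.2 (hμ j)),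
                div_eq_mul_inv]
          rw [Finset.sum_congr rfl this, ← Finset.sum_mul, ← hTcoe,
              ENNReal.mul_inv_cancel hT0' ENNReal.coe_ne_top])
        refine le_trans (sInf_le hmem) ?_
        -- (T:ℝ≥0∞) ^ (-(1/q)) ≤ ε
        have hεT : ((ε:ℝ≥0∞)) ^ (-q) ≤ (T : ℝ≥0∞) := le_of_lt (lt_of_le_of_lt (le_max_right _ _) hCT)
        have h1 : ((ε:ℝ≥0∞)) ⁻¹ ≤ (T : ℝ≥0∞) ^ (1/q) := by
          have := ENNReal.rpow_le_rpow hεT (by positivity : (0:ℝ) ≤ 1/q)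
          rwa [← ENNReal.rpow_mul, show -q * (1/q) = -1 by field_simp, ENNReal.rpow_neg_one]
            at this
        calc (T : ℝ≥0∞) ^ (-(1/q)) = ((T : ℝ≥0∞) ^ (1/q))⁻¹ := ENNReal.rpow_neg _ _
          _ ≤ (((ε:ℝ≥0∞))⁻¹)⁻¹ := ENNReal.inv_le_inv.2 h1
          _ = (ε:ℝ≥0∞) := inv_inv _
      · -- S finite: exact attainment
        set t : ℝ≥0 := S.toNNReal with htdef
        have htS : ((t : ℝ≥0∞)) = S := ENNReal.coe_toNNReal hStop
        have ht0 : t ≠ 0 := by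
          intro h; rw [h] at htS; exact hSpos htS.symm
        set w : J → ℝ≥0 := fun j => ‖μ j‖₊ ^ (-q) / t with hwdef
        have hmem := mem_aux μ hμ hpq w t ht0 (fun j => by
          right
          simp only [hwdef]
          rw [ENNReal.coe_div ht0, ENNReal.coe_rpow_of_ne_zero (nnnorm_ne_zero_iff.2 (hμ j))]) (by
          have : ∀ j, ((w j : ℝ≥0∞)) = (‖μ j‖₊ : ℝ≥0∞) ^ (-q) * (t : ℝ≥0∞)⁻¹ := fun j => by
            simp only [hwdef]
            rw [ENNReal.coe_div ht0, ENNReal.coe_rpow_of_ne_zero (nnnorm_ne_zero_iff.2 (hμ j)),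
                div_eq_mul_inv]
          rw [tsum_congr this, ENNReal.tsum_mul_right, ← hS, ← htS,
              ENNReal.mul_inv_cancel (by exact_mod_cast ht0) ENNReal.coe_ne_top])
        rw [← htS]
        exact sInf_le hmem
    · -- lower bound
      rintro s ⟨x, hx1, rfl⟩
      rcases eq_or_ne S ⊤ with hStop | hStop
      · rw [hStop, ENNReal.top_rpow_of_neg (neg_lt_zero.2 (by positivity))]
        exact zero_le
      have holder := tsum_mul_le_Lp_mul_Lq_aux
        (fun j => (‖x j * μ j‖₊ : ℝ≥0∞)) (fun j => (‖μ j‖₊ : ℝ≥0∞)⁻¹) hpq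
      have hfg : ∀ j, (‖x j * μ j‖₊ : ℝ≥0∞) * (‖μ j‖₊ : ℝ≥0∞)⁻¹ = (‖x j‖₊ : ℝ≥0∞) := by
        intro j
        rw [nnnorm_mul, ENNReal.coe_mul, mul_assoc,
            ENNReal.mul_inv_cancel (hm0 j) (hmtop j), mul_one]
      have hgq : ∀ j, ((‖μ j‖₊ : ℝ≥0∞)⁻¹) ^ q = (‖μ j‖₊ : ℝ≥0∞) ^ (-q) := fun j => by
        rw [ENNReal.inv_rpow, ← ENNReal.rpow_neg]
      rw [tsum_congr hfg, hx1, tsum_congr hgq, ← hS] at holder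
      -- holder : 1 ≤ s * S^(1/q)
      set s := (∑' j, (‖x j * μ j‖₊ : ℝ≥0∞) ^ p) ^ (1 / p) with hsdef
      have hc0 : S ^ (1/q) ≠ 0 := (ENNReal.rpow_pos (pos_iff_ne_zero.2 hSpos) hStop).ne'
      have hctop : S ^ (1/q) ≠ ⊤ := ENNReal.rpow_ne_top_of_nonneg (by positivity) hStop
      have : S ^ (-(1/q)) = (S ^ (1/q))⁻¹ := ENNReal.rpow_neg _ _
      rw [this]
      calc (S ^ (1/q))⁻¹ = 1 * (S ^ (1/q))⁻¹ := (one_mul _).symm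
        _ ≤ (s * S ^ (1/q)) * (S ^ (1/q))⁻¹ := mul_le_mul_left holder _
        _ = s := by rw [mul_assoc, ENNReal.mul_inv_cancel hc0 hctop, mul_one]
end

section
/- Let $X$ be a Banach space and $T$ a bounded linear operator on $X$. Suppose that for every nonempty weakly open subset $U$ of $X$ there exists an integer $n\geq 1$ with $T^n(U)\cap U\neq\emptyset$. Then for every nonempty weakly open subset $U$ of $X$ there exist infinitely many integers $k\geq 1$ with $T^k(U)\cap U\neq\emptyset$. -/
open Set

lemma weakOpen_preimage_aux {X : Type*} [NormedAddCommGroup X] [NormedSpace ℝ X]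
    (T : X →L[ℝ] X) (U : Set X) (hU : IsOpen (toWeakSpace ℝ X '' U)) :
    IsOpen (toWeakSpace ℝ X '' (T ⁻¹' U)) := by
  rw [show toWeakSpace ℝ X '' (T ⁻¹' U) = (WeakSpace.map T) ⁻¹' (toWeakSpace ℝ X '' U) by
    ext x
    simp only [toWeakSpace, WeakSpace.map, Set.mem_image, Set.mem_preimage,
      LinearEquiv.refl_apply]
    constructor
    · rintro ⟨y, hy, rfl⟩; exact ⟨T y, hy, rfl⟩
    · rintro ⟨y, hy, hyx⟩
      refine ⟨(toWeakSpace ℝ X).symm x, ?_, rfl⟩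
      have : y = T ((toWeakSpace ℝ X).symm x) := hyx
      rwa [this] at hy]
  exact hU.preimage (WeakSpace.map T).continuous

lemma step_aux {X : Type*} [NormedAddCommGroup X] [NormedSpace ℝ X] [CompleteSpace X]
    (T : X →L[ℝ] X)
    (h : ∀ U : Set X, U.Nonempty → IsOpen (toWeakSpace ℝ X '' U) →
      ∃ n : ℕ, 1 ≤ n ∧ ((T ^ n) '' U ∩ U).Nonempty)
    (U : Set X) (hUo : IsOpen (toWeakSpace ℝ X '' U)) (k : ℕ)
    (hk : ((T ^ k) '' U ∩ U).Nonempty) :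
    ∃ m : ℕ, 1 ≤ m ∧ ((T ^ (k + m)) '' U ∩ U).Nonempty := by
  set V : Set X := U ∩ (T ^ k) ⁻¹' U with hV
  have hVne : V.Nonempty := by
    obtain ⟨y, ⟨x, hxU, hxy⟩, hyU⟩ := hk
    exact ⟨x, hxU, by rw [Set.mem_preimage, hxy]; exact hyU⟩
  have hVo : IsOpen (toWeakSpace ℝ X '' V) := by
    rw [hV, Set.image_inter (toWeakSpace ℝ X).injective]
    exact hUo.inter (weakOpen_preimage_aux (T ^ k) U hUo)
  obtain ⟨m, hm1, z, ⟨x, hxV, hxz⟩, hzV⟩ := h V hVne hVo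
  refine ⟨m, hm1, (T ^ (k + m)) x, ⟨x, hxV.1, rfl⟩, ?_⟩
  have : (T ^ (k + m)) x = (T ^ k) ((T ^ m) x) := by
    rw [pow_add]; rfl
  rw [this, hxz]
  exact hzV.2

/-- If every nonempty weakly open subset of a Banach space returns to itself under
some positive iterate of `T`, then every nonempty weakly open subset returns to
itself for infinitely many positive iterates. -/
theorem stmt4 {X : Type*} [NormedAddCommGroup X] [NormedSpace ℝ X] [CompleteSpace X]
    (T : X →L[ℝ] X)
    (h : ∀ U : Set X, U.Nonempty → IsOpen (toWeakSpace ℝ X '' U) →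
      ∃ n : ℕ, 1 ≤ n ∧ ((T ^ n) '' U ∩ U).Nonempty) :
    ∀ U : Set X, U.Nonempty → IsOpen (toWeakSpace ℝ X '' U) →
      {k : ℕ | 1 ≤ k ∧ ((T ^ k) '' U ∩ U).Nonempty}.Infinite := by
  intro U hUne hUo
  have key : ∀ N : ℕ, ∃ k, N ≤ k ∧ 1 ≤ k ∧ ((T ^ k) '' U ∩ U).Nonempty := by
    intro N
    induction N with
    | zero =>
      obtain ⟨n, hn1, hn⟩ := h U hUne hUo
      exact ⟨n, Nat.zero_le _, hn1, hn⟩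
    | succ N ih =>
      obtain ⟨k, hNk, hk1, hk⟩ := ih
      obtain ⟨m, hm1, hkm⟩ := step_aux T h U hUo k hk
      exact ⟨k + m, by omega, by omega, hkm⟩
  apply Set.infinite_of_not_bddAbove
  rintro ⟨N, hN⟩
  obtain ⟨k, hNk, hk1, hk⟩ := key (N + 1)
  have := hN ⟨hk1, hk⟩
  omega
end

section
/- Let $X$ be a Banach space, $T$ a bounded linear operator on $X$, and $\mathcal{F}$ a Furstenberg family of subsets of $\mathbb{N}_0$ such that $A\cap[n,+\infty)\in\mathcal{F}$ whenever $A\in\mathcal{F}$ and $n\in\mathbb{N}$. If the set $X_0=\{x\in X: \lim_{n\to\infty}T^n x = 0\}$ is dense in $X$, then $T$ is $\mathcal{F}$-transitive if and only if $T$ is topologically $\mathcal{F}$-recurrent. -/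
open Set

/-- For an operator whose vectors with orbits tending to `0` are dense, and a
Furstenberg family `F` closed under intersecting with tails, `F`-transitivity is
equivalent to topological `F`-recurrence. -/
theorem stmt5 {X : Type*} [NormedAddCommGroup X] [NormedSpace ℝ X] [CompleteSpace X]
    (T : X →L[ℝ] X) (F : Set (Set ℕ))
    (hne : F.Nonempty)
    (hinf : ∀ A ∈ F, A.Infinite)
    (hup : ∀ A ∈ F, ∀ B : Set ℕ, A ⊆ B → B ∈ F)
    (htail : ∀ A ∈ F, ∀ n : ℕ, (A ∩ {m | n ≤ m}) ∈ F)
    (hdense : Dense {x : X | Filter.Tendsto (fun n => (T ^ n) x) Filter.atTop (nhds 0)}) :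
    (∀ U V : Set X, IsOpen U → U.Nonempty → IsOpen V → V.Nonempty →
        {n : ℕ | ((T ^ n) '' U ∩ V).Nonempty} ∈ F) ↔
    (∀ U : Set X, IsOpen U → U.Nonempty →
        {n : ℕ | ((T ^ n) '' U ∩ U).Nonempty} ∈ F) := by
  constructor
  · intro h U hU hUne
    exact h U U hU hUne hU hUne
  · intro h U V hU hUne hV hVne
    -- pick points with null orbit in U and V
    obtain ⟨u, hu0, huU⟩ := hdense.exists_mem_open hU hUne
    obtain ⟨v, hv0, hvV⟩ := hdense.exists_mem_open hV hVne
    obtain ⟨εu, hεu, hballU⟩ := Metric.isOpen_iff.1 hU u huU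
    obtain ⟨εv, hεv, hballV⟩ := Metric.isOpen_iff.1 hV v hvV
    set ε := min εu εv with hε
    have hεpos : 0 < ε := lt_min hεu hεv
    have hε4 : 0 < ε / 4 := by linarith
    -- recurrence applied to the ball around v of radius ε/4
    have hA : {n : ℕ | ((T ^ n) '' Metric.ball v (ε / 4) ∩ Metric.ball v (ε / 4)).Nonempty} ∈ F :=
      h _ Metric.isOpen_ball ⟨v, Metric.mem_ball_self hε4⟩
    -- tails where the orbits of u and v are small
    have hu0' : Filter.Tendsto (fun n => (T ^ n) u) Filter.atTop (nhds 0) := hu0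
    have hv0' : Filter.Tendsto (fun n => (T ^ n) v) Filter.atTop (nhds 0) := hv0
    obtain ⟨N₁, hN₁⟩ := (Metric.tendsto_atTop.1 hu0') (ε / 4) hε4
    obtain ⟨N₂, hN₂⟩ := (Metric.tendsto_atTop.1 hv0') (ε / 4) hε4
    set N := max N₁ N₂ with hN
    have hAN := htail _ hA N
    refine hup _ hAN _ ?_
    rintro n ⟨hnA, hnN⟩
    obtain ⟨y, ⟨w, hwW, rfl⟩, hyW⟩ := hnA
    have hn₁ : N₁ ≤ n := le_trans (le_max_left _ _) hnN
    have hn₂ : N₂ ≤ n := le_trans (le_max_right _ _) hnN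
    have hTu : ‖(T ^ n) u‖ < ε / 4 := by
      have := hN₁ n hn₁; rwa [dist_zero_right] at this
    have hTv : ‖(T ^ n) v‖ < ε / 4 := by
      have := hN₂ n hn₂; rwa [dist_zero_right] at this
    have hwv : ‖w - v‖ < ε / 4 := by
      have := hwW; rwa [Metric.mem_ball, dist_eq_norm] at this
    have hTwv : ‖(T ^ n) w - v‖ < ε / 4 := by
      have := hyW; rwa [Metric.mem_ball, dist_eq_norm] at this
    -- the corrected point
    refine ⟨(T ^ n) (u + w - v), ⟨u + w - v, ?_, rfl⟩, ?_⟩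
    · apply hballU
      rw [Metric.mem_ball, dist_eq_norm]
      have : u + w - v - u = w - v := by abel
      rw [this]
      calc ‖w - v‖ < ε / 4 := hwv
        _ ≤ ε := by linarith
        _ ≤ εu := min_le_left _ _
    · apply hballV
      rw [Metric.mem_ball, dist_eq_norm]
      have heq : (T ^ n) (u + w - v) - v
          = (T ^ n) u + ((T ^ n) w - v) + (-(T ^ n) v) := by
        rw [map_sub, map_add]; abel
      rw [heq]
      calc ‖(T ^ n) u + ((T ^ n) w - v) + (-(T ^ n) v)‖
          ≤ ‖(T ^ n) u‖ + ‖(T ^ n) w - v‖ + ‖-(T ^ n) v‖ := norm_add₃_le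
        _ = ‖(T ^ n) u‖ + ‖(T ^ n) w - v‖ + ‖(T ^ n) v‖ := by rw [norm_neg]
        _ < ε / 4 + ε / 4 + ε / 4 := by linarith
        _ ≤ ε := by linarith
        _ ≤ εv := min_le_right _ _
end

section
/- Let $X$ be a separable infinite-dimensional Banach space and $T$ a bounded linear operator on $X$ whose generalized kernel $\ker^*(T)=\bigcup_{n\geq 1}\ker(T^n)$ is dense in $X$. If $T$ has dense range, then for any unbounded subset $\Gamma$ of $\mathbb{C}$, the operator $T\oplus T$ on $X\times X$ is $\Gamma$-transitive in the following sense: for all nonempty open sets $U_1,U_2,V_1,V_2\subset X$ there exist $n\in\mathbb{N}$, $\lambda\in\Gamma$, and $(x_1,x_2)\in U_1\times U_2$ with $(\lambda T^n x_1, \lambda T^n x_2)\in V_1\times V_2$. -/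
open Set

private lemma dense_range_pow {X : Type*} [NormedAddCommGroup X] [NormedSpace ℂ X]
    (T : X →L[ℂ] X) (hrange : DenseRange T) (n : ℕ) : DenseRange ⇑(T ^ n) := by
  induction n with
  | zero => simpa using denseRange_id
  | succ k ih =>
      have : (T ^ (k + 1) : X →L[ℂ] X) = (T ^ k) * T := by rw [pow_succ]
      rw [this]
      have : ⇑((T ^ k) * T) = ⇑(T ^ k) ∘ ⇑T := rfl
      rw [this]
      exact DenseRange.comp ih hrange (T ^ k).continuous

/-- If `T` has dense generalized kernel and dense range on a separable
infinite-dimensional complex Banach space, then for any unbounded `Γ ⊆ ℂ` the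
operator `T ⊕ T` is `Γ`-transitive. -/
theorem stmt6 {X : Type*} [NormedAddCommGroup X] [NormedSpace ℂ X] [CompleteSpace X]
    [TopologicalSpace.SeparableSpace X]
    (hdim : ¬ FiniteDimensional ℂ X)
    (T : X →L[ℂ] X)
    (hker : Dense {x : X | ∃ n : ℕ, 1 ≤ n ∧ (T ^ n) x = 0})
    (hrange : DenseRange T)
    (Γ : Set ℂ) (hΓ : ∀ R : ℝ, ∃ lam ∈ Γ, R < ‖lam‖) :
    ∀ U₁ U₂ V₁ V₂ : Set X,
      IsOpen U₁ → U₁.Nonempty → IsOpen U₂ → U₂.Nonempty →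
      IsOpen V₁ → V₁.Nonempty → IsOpen V₂ → V₂.Nonempty →
      ∃ n : ℕ, ∃ lam ∈ Γ, ∃ x₁ ∈ U₁, ∃ x₂ ∈ U₂,
        lam • (T ^ n) x₁ ∈ V₁ ∧ lam • (T ^ n) x₂ ∈ V₂ := by
  intro U₁ U₂ V₁ V₂ hU₁ hU₁n hU₂ hU₂n hV₁ hV₁n hV₂ hV₂n
  obtain ⟨u₁, hu₁ker, hu₁⟩ := hker.exists_mem_open hU₁ hU₁n
  obtain ⟨u₂, hu₂ker, hu₂⟩ := hker.exists_mem_open hU₂ hU₂n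
  obtain ⟨m₁, hm₁, hT₁⟩ := hu₁ker
  obtain ⟨m₂, hm₂, hT₂⟩ := hu₂ker
  set m := max m₁ m₂ with hm
  have hTm₁ : (T ^ m) u₁ = 0 := by
    have : (T ^ m : X →L[ℂ] X) = T ^ (m - m₁) * T ^ m₁ := by
      rw [← pow_add, Nat.sub_add_cancel (le_max_left m₁ m₂)]
    rw [this]
    simp [ContinuousLinearMap.mul_apply, hT₁]
  have hTm₂ : (T ^ m) u₂ = 0 := by
    have : (T ^ m : X →L[ℂ] X) = T ^ (m - m₂) * T ^ m₂ := by
      rw [← pow_add, Nat.sub_add_cancel (le_max_right m₁ m₂)]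
    rw [this]
    simp [ContinuousLinearMap.mul_apply, hT₂]
  have hdr : Dense (Set.range ⇑(T ^ m)) := dense_range_pow T hrange m
  obtain ⟨y₁, ⟨z₁, hz₁⟩, hy₁⟩ := hdr.exists_mem_open hV₁ hV₁n
  obtain ⟨y₂, ⟨z₂, hz₂⟩, hy₂⟩ := hdr.exists_mem_open hV₂ hV₂n
  obtain ⟨δ₁, hδ₁, hball₁⟩ := Metric.isOpen_iff.mp hU₁ u₁ hu₁
  obtain ⟨δ₂, hδ₂, hball₂⟩ := Metric.isOpen_iff.mp hU₂ u₂ hu₂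
  obtain ⟨lam, hlamΓ, hlam⟩ := hΓ (max (‖z₁‖ / δ₁) (‖z₂‖ / δ₂))
  have hlam0 : lam ≠ 0 := by
    intro h
    rw [h, norm_zero] at hlam
    exact absurd hlam (not_lt.mpr (le_max_of_le_left (div_nonneg (norm_nonneg _) hδ₁.le)))
  have hnlam : 0 < ‖lam‖ := norm_pos_iff.mpr hlam0
  refine ⟨m, lam, hlamΓ, u₁ + lam⁻¹ • z₁, ?_, u₂ + lam⁻¹ • z₂, ?_, ?_, ?_⟩
  · apply hball₁
    have : ‖z₁‖ / δ₁ < ‖lam‖ := lt_of_le_of_lt (le_max_left _ _) hlam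
    have hz : ‖lam⁻¹ • z₁‖ < δ₁ := by
      rw [norm_smul, norm_inv]
      rw [div_lt_iff₀ hδ₁] at this
      rw [inv_mul_lt_iff₀ hnlam]
      linarith [this]
    simpa [Metric.mem_ball, dist_eq_norm] using hz
  · apply hball₂
    have : ‖z₂‖ / δ₂ < ‖lam‖ := lt_of_le_of_lt (le_max_right _ _) hlam
    have hz : ‖lam⁻¹ • z₂‖ < δ₂ := by
      rw [norm_smul, norm_inv]
      rw [div_lt_iff₀ hδ₂] at this
      rw [inv_mul_lt_iff₀ hnlam]
      linarith [this]
    simpa [Metric.mem_ball, dist_eq_norm] using hz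
  · have : lam • (T ^ m) (u₁ + lam⁻¹ • z₁) = y₁ := by
      rw [map_add, map_smul, hTm₁, zero_add, smul_smul, mul_inv_cancel₀ hlam0, one_smul, hz₁]
    rw [this]; exact hy₁
  · have : lam • (T ^ m) (u₂ + lam⁻¹ • z₂) = y₂ := by
      rw [map_add, map_smul, hTm₂, zero_add, smul_smul, mul_inv_cancel₀ hlam0, one_smul, hz₂]
    rw [this]; exact hy₂
end

section
/- Let $X$ be a separable infinite-dimensional Banach space and $T$ a bounded linear operator on $X$ whose generalized kernel $\bigcup_{n\geq1}\ker(T^n)$ is dense in $X$. If there exists an unbounded subset $\Gamma\subset\mathbb{C}$ such that $T$ is $\Gamma$-supercyclic, then $T$ has dense range. -/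
open Set

/-- If `T` has dense generalized kernel on a separable infinite-dimensional
complex Banach space and `T` is `Γ`-supercyclic for some unbounded `Γ ⊆ ℂ`,
then `T` has dense range. -/
theorem stmt7 {X : Type*} [NormedAddCommGroup X] [NormedSpace ℂ X] [CompleteSpace X]
    [TopologicalSpace.SeparableSpace X]
    (hdim : ¬ FiniteDimensional ℂ X)
    (T : X →L[ℂ] X)
    (hker : Dense {x : X | ∃ n : ℕ, 1 ≤ n ∧ (T ^ n) x = 0})
    (Γ : Set ℂ) (hΓ : ∀ R : ℝ, ∃ lam ∈ Γ, R < ‖lam‖)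
    (hsc : ∃ x : X, Dense {y : X | ∃ lam ∈ Γ, ∃ n : ℕ, y = lam • (T ^ n) x}) :
    DenseRange T := by
  by_contra hR
  obtain ⟨x, hx⟩ := hsc
  set M : Submodule ℂ X := (LinearMap.range (T : X →ₗ[ℂ] X)).topologicalClosure with hM
  have hMclosed : IsClosed (M : Set X) := Submodule.isClosed_topologicalClosure _
  have hMrange : (M : Set X) = closure (Set.range ⇑T) := by
    rw [hM, Submodule.topologicalClosure_coe]
    congr 1
  have hspanclosed : IsClosed ((Submodule.span ℂ {x} : Submodule ℂ X) : Set X) :=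
    Submodule.closed_of_finiteDimensional _
  -- the orbit set lies in the union of the two closed subspaces
  have hsub : {y : X | ∃ lam ∈ Γ, ∃ n : ℕ, y = lam • (T ^ n) x} ⊆
      ((Submodule.span ℂ {x} : Submodule ℂ X) : Set X) ∪ (M : Set X) := by
    rintro y ⟨lam, -, n, rfl⟩
    cases n with
    | zero =>
        left
        simpa using Submodule.smul_mem _ lam (Submodule.mem_span_singleton_self x)
    | succ m =>
        right
        apply Submodule.le_topologicalClosure
        refine ⟨lam • (T ^ m) x, ?_⟩
        simp [pow_succ']
  have hcover : (univ : Set X) ⊆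
      ((Submodule.span ℂ {x} : Submodule ℂ X) : Set X) ∪ (M : Set X) := by
    have := closure_minimal hsub (hspanclosed.union hMclosed)
    rwa [hx.closure_eq] at this
  -- there is a point outside M
  have hz : ∃ z, z ∉ M := by
    rw [DenseRange, Dense] at hR
    push_neg at hR
    obtain ⟨z, hz⟩ := hR
    refine ⟨z, fun h => hz ?_⟩
    rw [← SetLike.mem_coe, hMrange] at h
    exact h
  obtain ⟨z, hzM⟩ := hz
  have hzspan : z ∈ Submodule.span ℂ {x} := by
    rcases hcover (mem_univ z) with h | h
    · exact h
    · exact absurd h hzM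
  -- every vector lies in span {x}
  have hall : ∀ v : X, v ∈ Submodule.span ℂ {x} := by
    intro v
    rcases hcover (mem_univ v) with h | hv
    · exact h
    rcases hcover (mem_univ (v + z)) with h | hvz
    · have : v + z - z ∈ Submodule.span ℂ {x} := Submodule.sub_mem _ h hzspan
      simpa using this
    · exfalso
      apply hzM
      have : v + z - v ∈ M := Submodule.sub_mem _ hvz hv
      simpa using this
  have hspan : Submodule.span ℂ ({x} : Set X) = ⊤ := by
    rw [eq_top_iff]; intro v _; exact hall v
  exact hdim ⟨⟨{x}, by simpa using hspan⟩⟩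
end

section
/- Let $(V,E)$ be a directed tree, $\mu=(\mu_v)_{v\in V}$ a weight of nonzero scalars, and $B$ the backward shift defined by $(Bf)(v)=\sum_{u\in\mathrm{Chi}(v)}f(u)$. Then $B$ is a bounded linear operator on $\ell^1(V,\mu)$ if and only if $\sup_{v\in V\setminus\{\mathrm{root}\}}|\mu_{\mathrm{par}(v)}/\mu_v|<+\infty$, and in that case $\|B\|$ equals this supremum. -/
open scoped ENNReal NNReal

/-- A directed tree: a countable connected directed graph without circuits in
which every vertex has at most one parent. -/
structure DirTree {V : Type*} (E : V → V → Prop) : Prop where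
  ne : ∀ u v : V, E u v → u ≠ v
  connected : ∀ u v : V, u ≠ v → ∃ n : ℕ, ∃ w : Fin (n + 2) → V,
    w 0 = u ∧ w (Fin.last (n + 1)) = v ∧
    ∀ i : Fin (n + 1), E (w i.castSucc) (w i.succ) ∨ E (w i.succ) (w i.castSucc)
  noCircuit : ∀ n : ℕ, ∀ w : Fin (n + 2) → V, Function.Injective w →
    ¬ ∀ i : Fin (n + 2), E (w i) (w (i + 1))
  uniqueParent : ∀ v u₁ u₂ : V, E u₁ v → E u₂ v → u₁ = u₂

/-- The backward shift associated with an edge relation: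
`(Bf)(v) = ∑_{u ∈ Chi(v)} f(u)`. -/
noncomputable def Bop {V 𝕜 : Type*} [RCLike 𝕜] (E : V → V → Prop) (f : V → 𝕜) : V → 𝕜 :=
  fun v => ∑' u : {u // E v u}, f u

/-- The weighted `ℓ^p`-"norm" `(∑_v |f(v) μ(v)|^p)^{1/p}`, valued in `ℝ≥0∞`. -/
noncomputable def pnorm {V 𝕜 : Type*} [RCLike 𝕜] (μ : V → 𝕜) (p : ℝ) (f : V → 𝕜) : ℝ≥0∞ :=
  (∑' v, (‖f v * μ v‖₊ : ℝ≥0∞) ^ p) ^ (1 / p)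

lemma pnorm_one_eq {V 𝕜 : Type*} [RCLike 𝕜] (μ : V → 𝕜) (f : V → 𝕜) :
    pnorm μ 1 f = ∑' v, (‖f v * μ v‖₊ : ℝ≥0∞) := by
  simp [pnorm]

lemma coe_nnnorm_tsum_le {ι 𝕜 : Type*} [RCLike 𝕜] (f : ι → 𝕜) :
    (‖∑' i, f i‖₊ : ℝ≥0∞) ≤ ∑' i, (‖f i‖₊ : ℝ≥0∞) := by
  by_cases h : Summable fun i => ‖f i‖₊
  · rw [← ENNReal.coe_tsum h]
    exact ENNReal.coe_le_coe.mpr (nnnorm_tsum_le h)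
  · have : ∑' i, (‖f i‖₊ : ℝ≥0∞) = ⊤ := by
      by_contra htop
      exact h (ENNReal.tsum_coe_ne_top_iff_summable.mp htop)
    simp [this]

/-- Boundedness of the backward shift on `ℓ¹(V,μ)`: `B` is bounded iff
`sup_{v non-root} |μ_{par(v)}/μ_v| < ∞`, in which case its operator norm equals
this supremum.  (Here the supremum over pairs `u, v` with `E u v`, i.e. `u`
the parent of `v`, is the same supremum.) -/
theorem stmt9 {V 𝕜 : Type*} [RCLike 𝕜] [Countable V] [Nonempty V]
    {E : V → V → Prop} (hT : DirTree E) (μ : V → 𝕜) (hμ : ∀ v, μ v ≠ 0) :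
    ((∃ C : ℝ≥0∞, C ≠ ⊤ ∧ ∀ f : V → 𝕜, pnorm μ 1 (Bop E f) ≤ C * pnorm μ 1 f) ↔
      (⨆ (v : V) (u : V) (_ : E u v), (‖μ u‖₊ : ℝ≥0∞) / ‖μ v‖₊) ≠ ⊤) ∧
    sInf {C : ℝ≥0∞ | ∀ f : V → 𝕜, pnorm μ 1 (Bop E f) ≤ C * pnorm μ 1 f}
      = ⨆ (v : V) (u : V) (_ : E u v), (‖μ u‖₊ : ℝ≥0∞) / ‖μ v‖₊ := by
  set S : ℝ≥0∞ := ⨆ (v : V) (u : V) (_ : E u v), (‖μ u‖₊ : ℝ≥0∞) / ‖μ v‖₊ with hS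
  have hμ0 : ∀ v, (‖μ v‖₊ : ℝ≥0∞) ≠ 0 := fun v => by
    simp [nnnorm_eq_zero, hμ v]
  have hμt : ∀ v : V, (‖μ v‖₊ : ℝ≥0∞) ≠ ⊤ := fun v => ENNReal.coe_ne_top
  -- the supremum bounds each ratio
  have hratio : ∀ {u v : V}, E u v → (‖μ u‖₊ : ℝ≥0∞) / ‖μ v‖₊ ≤ S := by
    intro u v h
    exact le_iSup_of_le v (le_iSup_of_le u (le_iSup_of_le h le_rfl))
  -- key upper bound: S works as a bound
  have hupper : ∀ f : V → 𝕜, pnorm μ 1 (Bop E f) ≤ S * pnorm μ 1 f := by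
    intro f
    rw [pnorm_one_eq, pnorm_one_eq]
    calc ∑' v, (‖Bop E f v * μ v‖₊ : ℝ≥0∞)
        ≤ ∑' v, ∑' (u : {u // E v u}), S * (‖f u.1 * μ u.1‖₊ : ℝ≥0∞) := by
          refine ENNReal.tsum_le_tsum fun v => ?_
          calc (‖Bop E f v * μ v‖₊ : ℝ≥0∞)
              = (‖Bop E f v‖₊ : ℝ≥0∞) * ‖μ v‖₊ := by
                rw [nnnorm_mul, ENNReal.coe_mul]
            _ ≤ (∑' (u : {u // E v u}), (‖f u.1‖₊ : ℝ≥0∞)) * ‖μ v‖₊ :=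
                mul_le_mul_left (coe_nnnorm_tsum_le _) _
            _ = ∑' (u : {u // E v u}), (‖f u.1‖₊ : ℝ≥0∞) * ‖μ v‖₊ :=
                ENNReal.tsum_mul_right.symm
            _ ≤ ∑' (u : {u // E v u}), S * (‖f u.1 * μ u.1‖₊ : ℝ≥0∞) := by
                refine ENNReal.tsum_le_tsum fun u => ?_
                have heq : (‖f u.1‖₊ : ℝ≥0∞) * ‖μ v‖₊
                    = ((‖μ v‖₊ : ℝ≥0∞) / ‖μ u.1‖₊) * (‖f u.1 * μ u.1‖₊ : ℝ≥0∞) := by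
                  rw [nnnorm_mul, ENNReal.coe_mul, ← mul_assoc,
                    mul_comm ((‖μ v‖₊ : ℝ≥0∞) / ‖μ u.1‖₊) _, mul_assoc,
                    ENNReal.div_mul_cancel (hμ0 u.1) (hμt u.1)]
                rw [heq]
                exact mul_le_mul_left (hratio u.2) _
      _ = S * ∑' v, ∑' (u : {u // E v u}), (‖f u.1 * μ u.1‖₊ : ℝ≥0∞) := by
          simp_rw [ENNReal.tsum_mul_left]
      _ ≤ S * ∑' w, (‖f w * μ w‖₊ : ℝ≥0∞) := by
          refine mul_le_mul_right ?_ S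
          rw [← ENNReal.tsum_sigma' (fun p : Σ v, {u // E v u} =>
            (‖f p.2.1 * μ p.2.1‖₊ : ℝ≥0∞))]
          refine ENNReal.tsum_comp_le_tsum_of_injective
            (f := fun p : Σ v, {u // E v u} => p.2.1) ?_
            (fun w => (‖f w * μ w‖₊ : ℝ≥0∞))
          rintro ⟨v, u, hu⟩ ⟨v', u', hu'⟩ (h : u = u')
          subst h
          obtain rfl : v = v' := hT.uniqueParent u v v' hu hu'
          rfl
  -- key lower bound: any valid bound dominates S
  have hlower : ∀ C : ℝ≥0∞,
      (∀ f : V → 𝕜, pnorm μ 1 (Bop E f) ≤ C * pnorm μ 1 f) → S ≤ C := by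
    intro C hC
    classical
    refine iSup_le fun v => iSup_le fun u => iSup_le fun h => ?_
    set f : V → 𝕜 := fun w => if w = v then 1 else 0 with hf
    have hfn : pnorm μ 1 f = (‖μ v‖₊ : ℝ≥0∞) := by
      rw [pnorm_one_eq]
      rw [tsum_eq_single v (fun w hw => by simp [hf, hw])]
      simp [hf]
    have hBu : Bop E f u = 1 := by
      rw [Bop, tsum_eq_single (⟨v, h⟩ : {x // E u x})]
      · simp [hf]
      · rintro ⟨x, hx⟩ hne
        have : x ≠ v := fun hxv => hne (by simp [hxv])
        simp [hf, this]
    have hBn : (‖μ u‖₊ : ℝ≥0∞) ≤ pnorm μ 1 (Bop E f) := by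
      rw [pnorm_one_eq]
      calc (‖μ u‖₊ : ℝ≥0∞) = ‖Bop E f u * μ u‖₊ := by rw [hBu]; simp
        _ ≤ _ := ENNReal.le_tsum u
    have hkey : (‖μ u‖₊ : ℝ≥0∞) ≤ C * ‖μ v‖₊ := by
      calc (‖μ u‖₊ : ℝ≥0∞) ≤ pnorm μ 1 (Bop E f) := hBn
        _ ≤ C * pnorm μ 1 f := hC f
        _ = C * ‖μ v‖₊ := by rw [hfn]
    exact (ENNReal.div_le_iff (hμ0 v) (hμt v)).mpr hkey
  constructor
  · constructor
    · rintro ⟨C, hCt, hC⟩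
      exact fun hStop => hCt (top_le_iff.mp (hStop ▸ hlower C hC))
    · intro hSt
      exact ⟨S, hSt, hupper⟩
  · refine le_antisymm (sInf_le hupper) (le_sInf fun C hC => hlower C hC)
end

section
/- Let $(V,E)$ be a directed tree, $\mu$ a weight of nonzero scalars, $1<p<\infty$ with conjugate exponent $p^*$, and $B$ the backward shift $(Bf)(v)=\sum_{u\in\mathrm{Chi}(v)}f(u)$. Then $B$ is a bounded operator on $\ell^p(V,\mu)$ if and only if $\sup_{v\in V}\sum_{u\in\mathrm{Chi}(v)}|\mu_v/\mu_u|^{p^*}<+\infty$, and in that case $\|B\|=\sup_{v\in V}(\sum_{u\in\mathrm{Chi}(v)}|\mu_v/\mu_u|^{p^*})^{1/p^*}$. -/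
open scoped ENNReal NNReal

section Aux

variable {𝕜 : Type*} [RCLike 𝕜]

lemma aux_ennnorm_tsum_le {ι : Type*} (f : ι → 𝕜) :
    (‖∑' i, f i‖₊ : ℝ≥0∞) ≤ ∑' i, (‖f i‖₊ : ℝ≥0∞) := by
  by_cases h : ∑' i, (‖f i‖₊ : ℝ≥0∞) = ⊤
  · simp [h]
  · have hs : Summable fun i => ‖f i‖₊ := ENNReal.tsum_coe_ne_top_iff_summable.mp h
    rw [← ENNReal.coe_tsum hs]
    exact_mod_cast nnnorm_tsum_le hs

lemma aux_holder_tsum {ι : Type*} {p q : ℝ} (hpq : p.HolderConjugate q) (f g : ι → ℝ≥0∞) :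
    ∑' i, f i * g i ≤ (∑' i, f i ^ p) ^ (1 / p) * (∑' i, g i ^ q) ^ (1 / q) := by
  rw [ENNReal.tsum_eq_iSup_sum]
  refine iSup_le fun s => (ENNReal.inner_le_Lp_mul_Lq s f g hpq).trans ?_
  exact mul_le_mul' (ENNReal.rpow_le_rpow (ENNReal.sum_le_tsum s) hpq.one_div_nonneg)
    (ENNReal.rpow_le_rpow (ENNReal.sum_le_tsum s) hpq.symm.one_div_nonneg)

lemma aux_rpow_rpow_inv {a : ℝ} (ha : a ≠ 0) (x : ℝ≥0∞) : (x ^ a) ^ (1 / a) = x := by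
  rw [← ENNReal.rpow_mul, mul_one_div, div_self ha, ENNReal.rpow_one]

lemma aux_rpow_inv_rpow {a : ℝ} (ha : a ≠ 0) (x : ℝ≥0∞) : (x ^ (1 / a)) ^ a = x := by
  rw [← ENNReal.rpow_mul, one_div, inv_mul_cancel₀ ha, ENNReal.rpow_one]

lemma aux_nnnorm_ofReal_nnreal (x : ℝ≥0) : ‖(((x : ℝ)) : 𝕜)‖₊ = x := by
  refine NNReal.eq ?_
  rw [coe_nnnorm, RCLike.norm_ofReal, abs_of_nonneg x.coe_nonneg]

lemma aux_upper {V : Type*} {E : V → V → Prop}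
    (hpar : ∀ v u₁ u₂ : V, E u₁ v → E u₂ v → u₁ = u₂) (μ : V → 𝕜) (hμ : ∀ v, μ v ≠ 0)
    {p q : ℝ} (hpq : p.HolderConjugate q) (f : V → 𝕜) :
    pnorm μ p (Bop E f) ≤
      (⨆ v : V, (∑' u : {u // E v u}, ((‖μ v‖₊ : ℝ≥0∞) / ‖μ u.1‖₊) ^ q) ^ (1 / q)) *
        pnorm μ p f := by
  set S : V → ℝ≥0∞ := fun v => ∑' u : {u // E v u}, ((‖μ v‖₊ : ℝ≥0∞) / ‖μ u.1‖₊) ^ q with hS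
  set K : ℝ≥0∞ := ⨆ v : V, (S v) ^ (1 / q) with hKdef
  set a : V → ℝ≥0∞ := fun u => (‖f u * μ u‖₊ : ℝ≥0∞) with ha
  have hp0 : (0 : ℝ) < p := hpq.pos
  have key : ∀ v : V, (‖Bop E f v * μ v‖₊ : ℝ≥0∞) ^ p ≤
      (∑' u : {u // E v u}, a u.1 ^ p) * K ^ p := by
    intro v
    have step1 : (‖Bop E f v * μ v‖₊ : ℝ≥0∞) ≤
        ∑' u : {u // E v u}, a u.1 * ((‖μ v‖₊ : ℝ≥0∞) / ‖μ u.1‖₊) := by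
      calc (‖Bop E f v * μ v‖₊ : ℝ≥0∞) = (‖Bop E f v‖₊ : ℝ≥0∞) * ‖μ v‖₊ := by
            rw [nnnorm_mul, ENNReal.coe_mul]
        _ ≤ (∑' u : {u // E v u}, (‖f u.1‖₊ : ℝ≥0∞)) * ‖μ v‖₊ :=
            mul_le_mul_left (aux_ennnorm_tsum_le _) _
        _ = ∑' u : {u // E v u}, (‖f u.1‖₊ : ℝ≥0∞) * ‖μ v‖₊ := ENNReal.tsum_mul_right.symm
        _ = ∑' u : {u // E v u}, a u.1 * ((‖μ v‖₊ : ℝ≥0∞) / ‖μ u.1‖₊) := by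
            refine tsum_congr fun u => ?_
            have h0 : (‖μ u.1‖₊ : ℝ≥0∞) ≠ 0 := by simpa using hμ u.1
            rw [ha]
            dsimp only
            rw [nnnorm_mul, ENNReal.coe_mul, mul_assoc,
              ENNReal.mul_div_cancel h0 ENNReal.coe_ne_top]
    have step2 : (‖Bop E f v * μ v‖₊ : ℝ≥0∞) ≤
        (∑' u : {u // E v u}, a u.1 ^ p) ^ (1 / p) * K := by
      refine step1.trans ((aux_holder_tsum hpq _ _).trans ?_)
      exact mul_le_mul_right (le_iSup (fun v => (S v) ^ (1 / q)) v) _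
    calc (‖Bop E f v * μ v‖₊ : ℝ≥0∞) ^ p
        ≤ ((∑' u : {u // E v u}, a u.1 ^ p) ^ (1 / p) * K) ^ p :=
          ENNReal.rpow_le_rpow step2 hp0.le
      _ = (∑' u : {u // E v u}, a u.1 ^ p) * K ^ p := by
          rw [ENNReal.mul_rpow_of_nonneg _ _ hp0.le, aux_rpow_inv_rpow hp0.ne' _]
  have hinj : Function.Injective (fun x : Σ v : V, {u // E v u} => x.2.1) := by
    rintro ⟨v, u, hu⟩ ⟨w, u', hu'⟩ h
    dsimp at h
    subst h
    have : v = w := hpar u v w hu hu'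
    subst this
    rfl
  have hsum : ∑' v : V, ∑' u : {u // E v u}, a u.1 ^ p ≤ ∑' u : V, a u ^ p := by
    calc ∑' v : V, ∑' u : {u // E v u}, a u.1 ^ p
        = ∑' x : Σ v : V, {u // E v u}, a x.2.1 ^ p :=
          (ENNReal.tsum_sigma' (fun x : Σ v : V, {u // E v u} => a x.2.1 ^ p)).symm
      _ ≤ ∑' u : V, a u ^ p := ENNReal.tsum_comp_le_tsum_of_injective hinj _
  have main : ∑' v, (‖Bop E f v * μ v‖₊ : ℝ≥0∞) ^ p ≤ (∑' u : V, a u ^ p) * K ^ p := by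
    calc ∑' v, (‖Bop E f v * μ v‖₊ : ℝ≥0∞) ^ p
        ≤ ∑' v, (∑' u : {u // E v u}, a u.1 ^ p) * K ^ p := ENNReal.tsum_le_tsum key
      _ = (∑' v : V, ∑' u : {u // E v u}, a u.1 ^ p) * K ^ p := ENNReal.tsum_mul_right
      _ ≤ (∑' u : V, a u ^ p) * K ^ p := mul_le_mul_left hsum _
  calc pnorm μ p (Bop E f) = (∑' v, (‖Bop E f v * μ v‖₊ : ℝ≥0∞) ^ p) ^ (1 / p) := rfl
    _ ≤ ((∑' u : V, a u ^ p) * K ^ p) ^ (1 / p) :=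
        ENNReal.rpow_le_rpow main (by positivity)
    _ = K * pnorm μ p f := by
        rw [ENNReal.mul_rpow_of_nonneg _ _ (by positivity), aux_rpow_rpow_inv hp0.ne' K,
          mul_comm]
        rfl

lemma aux_lower {V : Type*} {E : V → V → Prop}
    (hpar : ∀ v u₁ u₂ : V, E u₁ v → E u₂ v → u₁ = u₂) (μ : V → 𝕜) (hμ : ∀ v, μ v ≠ 0)
    {p q : ℝ} (hpq : p.HolderConjugate q) {C : ℝ≥0∞}
    (hC : ∀ f : V → 𝕜, pnorm μ p (Bop E f) ≤ C * pnorm μ p f) (v : V) :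
    (∑' u : {u // E v u}, ((‖μ v‖₊ : ℝ≥0∞) / ‖μ u.1‖₊) ^ q) ≤ C ^ q := by
  classical
  rw [ENNReal.tsum_eq_iSup_sum]
  refine iSup_le fun F => ?_
  rcases F.eq_empty_or_nonempty with rfl | hF
  · simp
  set f : V → 𝕜 := fun u => if h : ∃ hu : E v u, (⟨u, hu⟩ : {u // E v u}) ∈ F
      then (((‖μ u‖₊ ^ (-q) : ℝ≥0) : ℝ) : 𝕜) else 0 with hf
  set Tn : ℝ≥0 := ∑ u ∈ F, ‖μ u.1‖₊ ^ (-q) with hTn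
  -- value of Bop at v
  have hBv : Bop E f v = ((Tn : ℝ) : 𝕜) := by
    have h0 : ∀ u : {u // E v u}, u ∉ F → f u.1 = 0 := by
      intro u hu
      rw [hf]
      dsimp only
      rw [dif_neg]
      rintro ⟨hu', hmem⟩
      exact hu (by simpa using hmem)
    rw [Bop, tsum_eq_sum h0]
    have : ∀ u : {u // E v u}, u ∈ F → f u.1 = (((‖μ u.1‖₊ ^ (-q) : ℝ≥0) : ℝ) : 𝕜) := by
      intro u huF
      rw [hf]
      dsimp only
      rw [dif_pos ⟨u.2, by simpa using huF⟩]
    rw [Finset.sum_congr rfl this, hTn]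
    push_cast
    rfl
  -- Bop vanishes away from v
  have hBw : ∀ w : V, w ≠ v → Bop E f w = 0 := by
    intro w hw
    have : ∀ u : {u // E w u}, f u.1 = 0 := by
      intro u
      rw [hf]
      dsimp only
      rw [dif_neg]
      rintro ⟨hu, -⟩
      exact hw (hpar u.1 w v u.2 hu)
    rw [Bop]
    simp [this]
  have hq0 : (0 : ℝ) < q := hpq.symm.pos
  have hp0 : (0 : ℝ) < p := hpq.pos
  have hexp : (1 - q) * p = -q := by
    linear_combination -hpq.mul_eq_add
  -- per term norms
  have hnorm : ∀ u : {u // E v u}, u ∈ F →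
      (‖f u.1 * μ u.1‖₊ : ℝ≥0∞) ^ p = ((‖μ u.1‖₊ ^ (-q) : ℝ≥0) : ℝ≥0∞) := by
    intro u huF
    have hc0 : ‖μ u.1‖₊ ≠ 0 := by simpa using hμ u.1
    have hfu : f u.1 = (((‖μ u.1‖₊ ^ (-q) : ℝ≥0) : ℝ) : 𝕜) := by
      rw [hf]; dsimp only; rw [dif_pos ⟨u.2, by simpa using huF⟩]
    rw [hfu, nnnorm_mul, aux_nnnorm_ofReal_nnreal]
    have : ‖μ u.1‖₊ ^ (-q) * ‖μ u.1‖₊ = ‖μ u.1‖₊ ^ (1 - q) := by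
      rw [show (1:ℝ) - q = -q + 1 by ring, NNReal.rpow_add hc0, NNReal.rpow_one]
    rw [this, ENNReal.coe_rpow_of_ne_zero (by positivity), ← ENNReal.rpow_mul, hexp,
      ENNReal.coe_rpow_of_ne_zero hc0]
  -- pnorm of f
  have hpf : pnorm μ p f = ((Tn : ℝ≥0∞)) ^ (1 / p) := by
    rw [pnorm]
    congr 1
    have hsupp : ∀ u : V, u ∉ F.image Subtype.val → (‖f u * μ u‖₊ : ℝ≥0∞) ^ p = 0 := by
      intro u hu
      have : f u = 0 := by
        rw [hf]
        dsimp only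
        rw [dif_neg]
        rintro ⟨hu', hmem⟩
        exact hu (Finset.mem_image.mpr ⟨⟨u, hu'⟩, hmem, rfl⟩)
      rw [this, zero_mul, nnnorm_zero, ENNReal.coe_zero, ENNReal.zero_rpow_of_pos hp0]
    rw [tsum_eq_sum hsupp,
      Finset.sum_image (fun x _ y _ h => Subtype.val_injective h)]
    rw [Finset.sum_congr rfl fun u hu => hnorm u hu, hTn]
    push_cast
    rfl
  -- lower bound for pnorm of Bop f
  have hTne : Tn ≠ 0 := by
    intro h
    obtain ⟨u, hu⟩ := hF
    have := (Finset.sum_eq_zero_iff.mp h) u hu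
    rw [NNReal.rpow_eq_zero_iff] at this
    exact (by simpa using hμ u.1 : ‖μ u.1‖₊ ≠ 0) this.1
  have hBnorm : ((Tn : ℝ≥0∞)) * (‖μ v‖₊ : ℝ≥0∞) ≤ pnorm μ p (Bop E f) := by
    have h1 : (‖Bop E f v * μ v‖₊ : ℝ≥0∞) = (Tn : ℝ≥0∞) * ‖μ v‖₊ := by
      rw [hBv, nnnorm_mul, aux_nnnorm_ofReal_nnreal, ENNReal.coe_mul]
    have h2 : (‖Bop E f v * μ v‖₊ : ℝ≥0∞) ^ p ≤
        ∑' w, (‖Bop E f w * μ w‖₊ : ℝ≥0∞) ^ p := ENNReal.le_tsum v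
    calc ((Tn : ℝ≥0∞)) * (‖μ v‖₊ : ℝ≥0∞)
        = ((‖Bop E f v * μ v‖₊ : ℝ≥0∞) ^ p) ^ (1 / p) := by
          rw [aux_rpow_rpow_inv hp0.ne', h1]
      _ ≤ pnorm μ p (Bop E f) := ENNReal.rpow_le_rpow h2 (by positivity)
  -- main inequality
  set T : ℝ≥0∞ := (Tn : ℝ≥0∞) with hT
  have hT0 : T ≠ 0 := by simpa [hT] using hTne
  have hTt : T ≠ ⊤ := ENNReal.coe_ne_top
  set M : ℝ≥0∞ := (‖μ v‖₊ : ℝ≥0∞) with hM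
  have key : T * M ≤ C * T ^ (1 / p) := (hBnorm.trans (hC f)).trans_eq (by rw [hpf])
  have hone : 1 / p + 1 / q = 1 := by rw [one_div, one_div, hpq.inv_add_inv_eq_one]
  have hsplit : T = T ^ (1 / p) * T ^ (1 / q) := by
    rw [← ENNReal.rpow_add _ _ hT0 hTt, hone, ENNReal.rpow_one]
  have hTp0 : T ^ (1 / p) ≠ 0 := (ENNReal.rpow_pos (pos_iff_ne_zero.mpr hT0) hTt).ne'
  have hTpt : T ^ (1 / p) ≠ ⊤ := ENNReal.rpow_ne_top_of_nonneg (by positivity) hTt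
  have h5 : T ^ (1 / q) * M ≤ C := by
    have h4 : T ^ (1 / p) * (T ^ (1 / q) * M) ≤ T ^ (1 / p) * C := by
      calc T ^ (1 / p) * (T ^ (1 / q) * M) = T * M := by rw [← mul_assoc, ← hsplit]
        _ ≤ C * T ^ (1 / p) := key
        _ = T ^ (1 / p) * C := mul_comm _ _
    exact (ENNReal.mul_le_mul_iff_right hTp0 hTpt).mp h4
  have h6 : T * M ^ q ≤ C ^ q := by
    have h7 := ENNReal.rpow_le_rpow h5 hq0.le
    rwa [ENNReal.mul_rpow_of_nonneg _ _ hq0.le, aux_rpow_inv_rpow hq0.ne' T] at h7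
  have hfin : ∑ u ∈ F, (M / (‖μ u.1‖₊ : ℝ≥0∞)) ^ q = M ^ q * T := by
    rw [hT, hTn, ENNReal.coe_finset_sum, Finset.mul_sum]
    refine Finset.sum_congr rfl fun u hu => ?_
    have hc0 : ‖μ u.1‖₊ ≠ 0 := by simpa using hμ u.1
    rw [ENNReal.div_rpow_of_nonneg _ _ hq0.le, div_eq_mul_inv,
      ENNReal.coe_rpow_of_ne_zero hc0, ENNReal.rpow_neg]
  calc ∑ u ∈ F, (M / (‖μ u.1‖₊ : ℝ≥0∞)) ^ q = M ^ q * T := hfin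
    _ = T * M ^ q := mul_comm _ _
    _ ≤ C ^ q := h6

end Aux

/-- Boundedness of the backward shift on `ℓ^p(V,μ)`, `1 < p < ∞`:
`B` is bounded iff `sup_v ∑_{u ∈ Chi(v)} |μ_v/μ_u|^{p*} < ∞`, and in that case
`‖B‖ = sup_v (∑_{u ∈ Chi(v)} |μ_v/μ_u|^{p*})^{1/p*}` where `p* = p/(p-1)`. -/
theorem stmt10 {V 𝕜 : Type*} [RCLike 𝕜] [Countable V] [Nonempty V]
    {E : V → V → Prop} (hT : DirTree E) (μ : V → 𝕜) (hμ : ∀ v, μ v ≠ 0)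
    (p : ℝ) (hp : 1 < p) :
    ((∃ C : ℝ≥0∞, C ≠ ⊤ ∧ ∀ f : V → 𝕜, pnorm μ p (Bop E f) ≤ C * pnorm μ p f) ↔
      (⨆ v : V, ∑' u : {u // E v u}, ((‖μ v‖₊ : ℝ≥0∞) / ‖μ u.1‖₊) ^ (p / (p - 1))) ≠ ⊤) ∧
    sInf {C : ℝ≥0∞ | ∀ f : V → 𝕜, pnorm μ p (Bop E f) ≤ C * pnorm μ p f}
      = ⨆ v : V, (∑' u : {u // E v u},
          ((‖μ v‖₊ : ℝ≥0∞) / ‖μ u.1‖₊) ^ (p / (p - 1))) ^ (1 / (p / (p - 1))) := by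
  have hpq : p.HolderConjugate (p / (p - 1)) := Real.HolderConjugate.conjExponent hp
  set q : ℝ := p / (p - 1) with hq
  set S : V → ℝ≥0∞ := fun v => ∑' u : {u // E v u}, ((‖μ v‖₊ : ℝ≥0∞) / ‖μ u.1‖₊) ^ q with hS
  set K : ℝ≥0∞ := ⨆ v : V, (S v) ^ (1 / q) with hK
  have hup : ∀ f : V → 𝕜, pnorm μ p (Bop E f) ≤ K * pnorm μ p f :=
    aux_upper hT.uniqueParent μ hμ hpq
  have hlow : ∀ C : ℝ≥0∞, (∀ f : V → 𝕜, pnorm μ p (Bop E f) ≤ C * pnorm μ p f) →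
      ∀ v, S v ≤ C ^ q := fun C h v => aux_lower hT.uniqueParent μ hμ hpq h v
  constructor
  · constructor
    · rintro ⟨C, hCt, hC⟩
      have h1 : ⨆ v, S v ≤ C ^ q := iSup_le fun v => hlow C hC v
      exact ne_top_of_le_ne_top (ENNReal.rpow_ne_top_of_nonneg hpq.symm.nonneg hCt) h1
    · intro h
      refine ⟨K, ?_, hup⟩
      have h1 : K ≤ (⨆ v, S v) ^ (1 / q) :=
        iSup_le fun v => ENNReal.rpow_le_rpow (le_iSup S v) hpq.symm.one_div_nonneg
      exact ne_top_of_le_ne_top (ENNReal.rpow_ne_top_of_nonneg hpq.symm.one_div_nonneg h) h1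
  · refine le_antisymm (sInf_le hup) (le_sInf fun C hC => iSup_le fun v => ?_)
    calc (S v) ^ (1 / q) ≤ (C ^ q) ^ (1 / q) :=
          ENNReal.rpow_le_rpow (hlow C hC v) hpq.symm.one_div_nonneg
      _ = C := aux_rpow_rpow_inv hpq.symm.ne_zero C
end

section
/- Let $(V,E)$ be a rooted directed tree, $\mu$ a weight, $1<p<\infty$, and suppose the backward shift $B$ is bounded on $X=\ell^p(V,\mu)$ with $\|B\|\leq C$, $C\geq 2$. If there exist an increasing sequence $(n_k)_{k\geq1}$ of positive integers and a vertex $v\in V$ such that $(\sum_{u\in\mathrm{Chi}^{n_k+k}(v)}|\mu_u|^{-p^*})^{-1/p^*}<C^{-2k}$ for all $k$, then for every $l\in\mathbb{N}_0$ one has $\sum_{u\in\mathrm{Chi}^{n_k+l}(v)}|\mu_u|^{-p^*}\to+\infty$ as $k\to\infty$. -/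
open scoped ENNReal NNReal

/-- `chiIter E n v` is `Chi^n(v)`, the set of `n`-th generation descendants of `v`. -/
def chiIter {V : Type*} (E : V → V → Prop) : ℕ → V → Set V
  | 0, v => {v}
  | n + 1, v => {u | ∃ w, E v w ∧ u ∈ chiIter E n w}

private lemma chiIter_succ_mem {V : Type*} {E : V → V → Prop} :
    ∀ (m : ℕ) (v u : V), u ∈ chiIter E (m + 1) v ↔ ∃ w, w ∈ chiIter E m v ∧ E w u := by
  intro m
  induction m with
  | zero =>
    intro v u
    simp only [chiIter, Set.mem_setOf_eq, Set.mem_singleton_iff]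
    constructor
    · rintro ⟨w, hw, rfl⟩; exact ⟨v, rfl, hw⟩
    · rintro ⟨w, rfl, hw⟩; exact ⟨u, hw, rfl⟩
  | succ m ih =>
    intro v u
    simp only [chiIter, Set.mem_setOf_eq]
    constructor
    · rintro ⟨w, hvw, hu⟩
      obtain ⟨x, hx, hxu⟩ := (ih w u).1 hu
      exact ⟨x, ⟨w, hvw, hx⟩, hxu⟩
    · rintro ⟨x, ⟨w, hvw, hx⟩, hxu⟩
      exact ⟨w, hvw, (ih w u).2 ⟨x, hx, hxu⟩⟩

private lemma tsum_holder {ι : Type*} (f g : ι → ℝ≥0∞) {p q : ℝ}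
    (hpq : Real.HolderConjugate p q) :
    ∑' i, f i * g i ≤ (∑' i, f i ^ p) ^ (1 / p) * (∑' i, g i ^ q) ^ (1 / q) := by
  rw [ENNReal.tsum_eq_iSup_sum]
  refine iSup_le fun s => le_trans (ENNReal.inner_le_Lp_mul_Lq s f g hpq) ?_
  exact mul_le_mul' (ENNReal.rpow_le_rpow (ENNReal.sum_le_tsum s) hpq.one_div_nonneg)
    (ENNReal.rpow_le_rpow (ENNReal.sum_le_tsum s) hpq.symm.one_div_nonneg)

private lemma sum_le_tsum_subtype {ι : Type*} (s : Set ι) (T : Finset ι)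
    (hT : ∀ w ∈ T, w ∈ s) (h : ι → ℝ≥0∞) : ∑ w ∈ T, h w ≤ ∑' w : s, h w.1 := by
  rw [tsum_subtype]
  refine le_trans (le_of_eq ?_) (ENNReal.sum_le_tsum T)
  exact Finset.sum_congr rfl fun w hw => (Set.indicator_of_mem (hT w hw) h).symm

private lemma nnnorm_ofReal_nnreal {𝕜 : Type*} [RCLike 𝕜] (r : ℝ≥0) :
    ‖(((r : ℝ)) : 𝕜)‖₊ = r := by
  ext
  simp [RCLike.norm_ofReal]

private lemma keyStep {V 𝕜 : Type*} [RCLike 𝕜] {E : V → V → Prop} {μ : V → 𝕜}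
    (hμ : ∀ w, μ w ≠ 0) {p q : ℝ} (hpq : Real.HolderConjugate p q)
    {C : ℝ≥0∞}
    (hB : ∀ f : V → 𝕜, pnorm μ p (Bop E f) ≤ C * pnorm μ p f)
    (v : V) (m : ℕ) :
    (∑' u : chiIter E (m + 1) v, (‖μ u.1‖₊ : ℝ≥0∞) ^ (-q))
      ≤ C ^ q * ∑' u : chiIter E m v, (‖μ u.1‖₊ : ℝ≥0∞) ^ (-q) := by
  classical
  have hq0 : 0 < q := hpq.symm.pos
  have hp0 : 0 < p := hpq.pos
  set S : ℝ≥0∞ := ∑' u : chiIter E m v, (‖μ u.1‖₊ : ℝ≥0∞) ^ (-q) with hS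
  set a : V → ℝ≥0∞ := fun u => (‖μ u‖₊ : ℝ≥0∞) ^ (-q) with ha
  set b : V → ℝ≥0 := fun u => ‖μ u‖₊ ^ (-q) with hb
  have hab : ∀ u, a u = (b u : ℝ≥0∞) := fun u =>
    (ENNReal.coe_rpow_of_ne_zero (nnnorm_ne_zero_iff.2 (hμ u)) _).symm
  rw [ENNReal.tsum_eq_iSup_sum]
  refine iSup_le fun F0 => ?_
  set F : Finset V := F0.image Subtype.val with hFdef
  have hsum0 : ∑ u ∈ F0, a u.1 = ∑ u ∈ F, a u :=
    (Finset.sum_image (fun x _ y _ h => Subtype.val_injective h)).symm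
  have hF : ∀ u ∈ F, u ∈ chiIter E (m + 1) v := by
    intro u hu
    rcases Finset.mem_image.1 hu with ⟨x, _, rfl⟩
    exact x.2
  rw [hsum0]
  set A : ℝ≥0∞ := ∑ u ∈ F, a u with hA
  have hAtop : A ≠ ⊤ := by
    rw [hA]
    refine (ENNReal.sum_lt_top.2 fun u _ => ?_).ne
    rw [hab u]; exact ENNReal.coe_lt_top
  rcases eq_or_ne A 0 with hA0 | hA0
  · rw [hA0]; exact zero_le
  -- the test function
  set f : V → 𝕜 := fun u => if u ∈ F then ((b u : ℝ) : 𝕜) else 0 with hf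
  have hexp : (-q + 1) * p = -q := by
    have h := hpq.mul_eq_add
    nlinarith [h]
  -- pnorm of f
  have hcalc : ∀ c : ℝ≥0∞, c ≠ 0 → c ≠ ⊤ → (c ^ (-q) * c) ^ p = c ^ (-q) := by
    intro c hc0 hct
    have h1 : c ^ (-q) * c = c ^ (-q + 1) := by
      rw [ENNReal.rpow_add _ _ hc0 hct, ENNReal.rpow_one]
    rw [h1, ← ENNReal.rpow_mul, hexp]
  have hterm : ∀ u ∈ F, (‖f u * μ u‖₊ : ℝ≥0∞) ^ p = a u := by
    intro u hu
    have hfu : f u = ((b u : ℝ) : 𝕜) := if_pos hu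
    have hc0 : (‖μ u‖₊ : ℝ≥0∞) ≠ 0 := by
      simpa using (nnnorm_ne_zero_iff.2 (hμ u))
    have hct : (‖μ u‖₊ : ℝ≥0∞) ≠ ⊤ := ENNReal.coe_ne_top
    rw [hfu, nnnorm_mul, nnnorm_ofReal_nnreal, ENNReal.coe_mul, ← hab u]
    simp only [ha]
    exact hcalc _ hc0 hct
  have hfnorm : pnorm μ p f = A ^ (1 / p) := by
    rw [pnorm]
    congr 1
    rw [tsum_eq_sum (s := F) (fun u hu => by
      simp only [hf, if_neg hu, zero_mul, nnnorm_zero, ENNReal.coe_zero,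
        ENNReal.zero_rpow_of_pos hp0])]
    exact Finset.sum_congr rfl hterm
  -- value of B f
  set gN : V → ℝ≥0 := fun w => ∑ u ∈ F.filter (fun u => E w u), b u with hgN
  have hBop : ∀ w : V, Bop E f w = (((gN w : ℝ)) : 𝕜) := by
    intro w
    rw [Bop]
    have h1 : ∑' u : {u // E w u}, f u.1 = ∑' u : V, Set.indicator {u | E w u} f u :=
      tsum_subtype {u | E w u} f
    rw [h1, tsum_eq_sum (s := F) (fun u hu => by
      by_cases h : E w u <;>
        simp [Set.indicator_apply, Set.mem_setOf_eq, h, hf, if_neg hu])]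
    have h2 : ∑ u ∈ F, Set.indicator {u | E w u} f u
        = ∑ u ∈ F.filter (fun u => E w u), f u := by
      rw [Finset.sum_filter]
      exact Finset.sum_congr rfl fun u hu => by
        simp [Set.indicator_apply, Set.mem_setOf_eq]
    rw [h2, hgN]
    push_cast
    refine Finset.sum_congr rfl fun u hu => ?_
    exact if_pos (Finset.mem_filter.1 hu).1
  have hgNcoe : ∀ w : V, ((gN w : ℝ≥0) : ℝ≥0∞) = ∑ u ∈ F.filter (fun u => E w u), a u := by
    intro w
    rw [hgN, ENNReal.coe_finset_sum]
    exact Finset.sum_congr rfl fun u _ => (hab u).symm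
  -- step 1 : A ≤ ∑' over chi^m of gN
  have hPar : ∀ u ∈ F, ∃ w, w ∈ chiIter E m v ∧ E w u := fun u hu =>
    (chiIter_succ_mem m v u).1 (hF u hu)
  choose! P hP1 hP2 using hPar
  have step1 : A ≤ ∑' w : chiIter E m v, ((gN w.1 : ℝ≥0) : ℝ≥0∞) := by
    have h1 : ∑ w ∈ F.image P, ∑ u ∈ F.filter (fun u => P u = w), a u = A :=
      Finset.sum_fiberwise_of_maps_to (fun x hx => Finset.mem_image_of_mem P hx) a
    rw [← h1]
    refine le_trans (Finset.sum_le_sum fun w _ => ?_)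
      (sum_le_tsum_subtype _ _ (fun w hw => ?_) (fun w => ((gN w : ℝ≥0) : ℝ≥0∞)))
    · rw [hgNcoe w]
      refine Finset.sum_le_sum_of_subset fun u hu => ?_
      rcases Finset.mem_filter.1 hu with ⟨huF, hPu⟩
      exact Finset.mem_filter.2 ⟨huF, hPu ▸ hP2 u huF⟩
    · rcases Finset.mem_image.1 hw with ⟨u, huF, rfl⟩
      exact hP1 u huF
  -- Hölder
  have step3 : (∑' w : chiIter E m v, ((gN w.1 : ℝ≥0) : ℝ≥0∞))
      ≤ (∑' w : chiIter E m v, (((gN w.1 : ℝ≥0) : ℝ≥0∞) * (‖μ w.1‖₊ : ℝ≥0∞)) ^ p) ^ (1 / p)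
        * S ^ (1 / q) := by
    have hmain := tsum_holder
      (fun w : chiIter E m v => ((gN w.1 : ℝ≥0) : ℝ≥0∞) * (‖μ w.1‖₊ : ℝ≥0∞))
      (fun w : chiIter E m v => (‖μ w.1‖₊ : ℝ≥0∞) ^ (-1 : ℝ)) hpq
    have hleft : ∑' w : chiIter E m v, ((gN w.1 : ℝ≥0) : ℝ≥0∞)
        = ∑' w : chiIter E m v,
          (((gN w.1 : ℝ≥0) : ℝ≥0∞) * (‖μ w.1‖₊ : ℝ≥0∞)) * ((‖μ w.1‖₊ : ℝ≥0∞) ^ (-1 : ℝ)) := by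
      refine tsum_congr fun w => ?_
      have hc0 : (‖μ w.1‖₊ : ℝ≥0∞) ≠ 0 := by
        simpa using (nnnorm_ne_zero_iff.2 (hμ w.1))
      rw [ENNReal.rpow_neg, ENNReal.rpow_one, mul_assoc,
        ENNReal.mul_inv_cancel hc0 ENNReal.coe_ne_top, mul_one]
    have hright : ∑' w : chiIter E m v, ((‖μ w.1‖₊ : ℝ≥0∞) ^ (-1 : ℝ)) ^ q = S := by
      refine tsum_congr fun w => ?_
      rw [← ENNReal.rpow_mul, neg_one_mul]
    rw [hleft]
    calc ∑' w : chiIter E m v,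
          (((gN w.1 : ℝ≥0) : ℝ≥0∞) * (‖μ w.1‖₊ : ℝ≥0∞)) * ((‖μ w.1‖₊ : ℝ≥0∞) ^ (-1 : ℝ))
        ≤ _ * _ := hmain
      _ = _ := by rw [hright]
  -- first factor bound
  have step4 : (∑' w : chiIter E m v,
      (((gN w.1 : ℝ≥0) : ℝ≥0∞) * (‖μ w.1‖₊ : ℝ≥0∞)) ^ p) ^ (1 / p) ≤ C * A ^ (1 / p) := by
    have h1 : ∀ w : V, ((gN w : ℝ≥0) : ℝ≥0∞) * (‖μ w‖₊ : ℝ≥0∞)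
        = (‖Bop E f w * μ w‖₊ : ℝ≥0∞) := by
      intro w
      rw [hBop w, nnnorm_mul, nnnorm_ofReal_nnreal, ENNReal.coe_mul]
    calc (∑' w : chiIter E m v, (((gN w.1 : ℝ≥0) : ℝ≥0∞) * (‖μ w.1‖₊ : ℝ≥0∞)) ^ p) ^ (1 / p)
        = (∑' w : chiIter E m v, (‖Bop E f w.1 * μ w.1‖₊ : ℝ≥0∞) ^ p) ^ (1 / p) := by
          congr 1; exact tsum_congr fun w => by rw [h1 w.1]
      _ ≤ (∑' w : V, (‖Bop E f w * μ w‖₊ : ℝ≥0∞) ^ p) ^ (1 / p) :=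
          ENNReal.rpow_le_rpow
            (ENNReal.tsum_comp_le_tsum_of_injective Subtype.val_injective
              (fun w => (‖Bop E f w * μ w‖₊ : ℝ≥0∞) ^ p))
            (by positivity)
      _ = pnorm μ p (Bop E f) := rfl
      _ ≤ C * pnorm μ p f := hB f
      _ = C * A ^ (1 / p) := by rw [hfnorm]
  have main : A ≤ C * A ^ (1 / p) * S ^ (1 / q) :=
    step1.trans (step3.trans (mul_le_mul' step4 le_rfl))
  -- cancellation
  have hA1p_ne0 : A ^ (1 / p) ≠ 0 := by
    simp only [ne_eq, ENNReal.rpow_eq_zero_iff, not_or, not_and]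
    constructor
    · intro h; exact absurd h hA0
    · intro h; exact absurd h hAtop
  have hA1p_net : A ^ (1 / p) ≠ ⊤ := ENNReal.rpow_ne_top_of_nonneg (by positivity) hAtop
  have final : A ^ (1 / q) ≤ C * S ^ (1 / q) := by
    have h2 : A ^ (1 / p) * A ^ (1 / q) ≤ A ^ (1 / p) * (C * S ^ (1 / q)) := by
      calc A ^ (1 / p) * A ^ (1 / q) = A := by
            rw [← ENNReal.rpow_add _ _ hA0 hAtop]
            rw [show (1 / p + 1 / q) = 1 by
              rw [one_div, one_div]; exact hpq.inv_add_inv_eq_one]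
            exact ENNReal.rpow_one A
        _ ≤ C * A ^ (1 / p) * S ^ (1 / q) := main
        _ = A ^ (1 / p) * (C * S ^ (1 / q)) := by ring
    exact (ENNReal.mul_le_mul_iff_right hA1p_ne0 hA1p_net).1 h2
  calc A = (A ^ (1 / q)) ^ q := by
        rw [← ENNReal.rpow_mul, one_div, inv_mul_cancel₀ hq0.ne', ENNReal.rpow_one]
    _ ≤ (C * S ^ (1 / q)) ^ q := ENNReal.rpow_le_rpow final hq0.le
    _ = C ^ q * S := by
        rw [ENNReal.mul_rpow_of_nonneg _ _ hq0.le, ← ENNReal.rpow_mul, one_div,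
          inv_mul_cancel₀ hq0.ne', ENNReal.rpow_one]


open Filter

/-- If `‖B‖ ≤ C` with `C ≥ 2` and `(∑_{u ∈ Chi^{n_k+k}(v)} |μ_u|^{-p*})^{-1/p*} < C^{-2k}`
for all `k ≥ 1`, then for every `l` one has `∑_{u ∈ Chi^{n_k+l}(v)} |μ_u|^{-p*} → ∞`. -/
theorem stmt12 {V 𝕜 : Type*} [RCLike 𝕜] [Countable V] [Nonempty V]
    {E : V → V → Prop} (hT : DirTree E) (μ : V → 𝕜) (hμ : ∀ w, μ w ≠ 0)
    (o : V) (ho : ∀ u, ¬ E u o) (hreach : ∀ w : V, ∃ m : ℕ, w ∈ chiIter E m o)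
    (p : ℝ) (hp : 1 < p)
    (C : ℝ≥0∞) (hC2 : 2 ≤ C) (hCtop : C ≠ ⊤)
    (hB : ∀ f : V → 𝕜, pnorm μ p (Bop E f) ≤ C * pnorm μ p f)
    (n : ℕ → ℕ) (hmono : ∀ k, 1 ≤ k → n k < n (k + 1)) (hpos : ∀ k, 1 ≤ k → 0 < n k)
    (v : V)
    (hsmall : ∀ k : ℕ, 1 ≤ k →
      (∑' u : chiIter E (n k + k) v, (‖μ u.1‖₊ : ℝ≥0∞) ^ (-(p / (p - 1))))
          ^ (-(1 / (p / (p - 1)))) < C ^ (-(2 * (k : ℝ)))) :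
    ∀ l : ℕ, Tendsto (fun k => ∑' u : chiIter E (n k + l) v,
        (‖μ u.1‖₊ : ℝ≥0∞) ^ (-(p / (p - 1)))) atTop (nhds ⊤) := by
  intro l
  have hpq : Real.HolderConjugate p (p / (p - 1)) := Real.HolderConjugate.conjExponent hp
  set q : ℝ := p / (p - 1) with hqdef
  have hq1 : 1 < q := hpq.symm.lt
  have hq0 : 0 < q := hpq.symm.pos
  have hC0 : C ≠ 0 := by
    intro h; rw [h] at hC2; simp at hC2
  have hC1 : 1 ≤ C := le_trans one_le_two hC2
  set S : ℕ → ℝ≥0∞ := fun m => ∑' u : chiIter E m v, (‖μ u.1‖₊ : ℝ≥0∞) ^ (-q) with hSdef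
  have key : ∀ m, S (m + 1) ≤ C ^ q * S m := fun m => keyStep hμ hpq hB v m
  have iter : ∀ m j : ℕ, S (m + j) ≤ (C ^ q) ^ j * S m := by
    intro m j
    induction j with
    | zero => simp
    | succ j ih =>
      calc S (m + (j + 1)) = S ((m + j) + 1) := by rw [← add_assoc]
        _ ≤ C ^ q * S (m + j) := key _
        _ ≤ C ^ q * ((C ^ q) ^ j * S m) := mul_le_mul_right ih _
        _ = (C ^ q) ^ (j + 1) * S m := by ring
  have lower : ∀ k : ℕ, max l 1 ≤ k → (2 : ℝ≥0∞) ^ k ≤ S (n k + l) := by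
    intro k hk
    have hl : l ≤ k := le_trans (le_max_left _ _) hk
    have hk1 : 1 ≤ k := le_trans (le_max_right _ _) hk
    have h1 := hsmall k hk1
    rw [ENNReal.rpow_neg, ENNReal.rpow_neg] at h1
    have h2 : C ^ (2 * (k : ℝ)) < (S (n k + k)) ^ (1 / q) := ENNReal.inv_lt_inv.1 h1
    have h3 : C ^ (2 * (k : ℝ) * q) ≤ S (n k + k) := by
      calc C ^ (2 * (k : ℝ) * q) = (C ^ (2 * (k : ℝ))) ^ q := ENNReal.rpow_mul _ _ _
        _ ≤ ((S (n k + k)) ^ (1 / q)) ^ q := ENNReal.rpow_le_rpow h2.le hq0.le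
        _ = S (n k + k) := by
            rw [← ENNReal.rpow_mul, one_div, inv_mul_cancel₀ hq0.ne', ENNReal.rpow_one]
    have h4 : S (n k + k) ≤ (C ^ q) ^ (k - l) * S (n k + l) := by
      have heq : n k + k = (n k + l) + (k - l) := by omega
      rw [heq]
      exact iter _ _
    have hr : ((k - l : ℕ) : ℝ) = (k : ℝ) - l := by
      rw [Nat.cast_sub hl]
    have hpow : (C ^ q) ^ (k - l) = C ^ (q * ((k : ℝ) - l)) := by
      calc (C ^ q) ^ (k - l) = (C ^ q) ^ (((k - l : ℕ) : ℝ)) := (ENNReal.rpow_natCast _ _).symm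
        _ = C ^ (q * ((k - l : ℕ) : ℝ)) := (ENNReal.rpow_mul _ _ _).symm
        _ = C ^ (q * ((k : ℝ) - l)) := by rw [hr]
    have h5 : C ^ (2 * (k : ℝ) * q) ≤ C ^ (q * ((k : ℝ) - l)) * S (n k + l) := by
      rw [← hpow]; exact h3.trans h4
    have hb0 : C ^ (q * ((k : ℝ) - l)) ≠ 0 := by
      simp [ENNReal.rpow_eq_zero_iff, hC0, hCtop]
    have hbt : C ^ (q * ((k : ℝ) - l)) ≠ ⊤ := by
      simp [ENNReal.rpow_eq_top_iff, hC0, hCtop]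
    have h6 : C ^ (q * ((k : ℝ) + l)) ≤ S (n k + l) := by
      have heq2 : (2 * (k : ℝ) * q) = q * ((k : ℝ) + l) + q * ((k : ℝ) - l) := by ring
      rw [heq2, ENNReal.rpow_add _ _ hC0 hCtop] at h5
      calc C ^ (q * ((k : ℝ) + l))
          = C ^ (q * ((k : ℝ) + l)) * C ^ (q * ((k : ℝ) - l)) * (C ^ (q * ((k : ℝ) - l)))⁻¹ := by
            rw [mul_assoc, ENNReal.mul_inv_cancel hb0 hbt, mul_one]
        _ ≤ (C ^ (q * ((k : ℝ) - l)) * S (n k + l)) * (C ^ (q * ((k : ℝ) - l)))⁻¹ :=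
            mul_le_mul_left h5 _
        _ = S (n k + l) := by
            rw [mul_comm (C ^ (q * ((k : ℝ) - l))) (S (n k + l)), mul_assoc,
              ENNReal.mul_inv_cancel hb0 hbt, mul_one]
    calc (2 : ℝ≥0∞) ^ k = (2 : ℝ≥0∞) ^ ((k : ℕ) : ℝ) := (ENNReal.rpow_natCast _ _).symm
      _ ≤ C ^ ((k : ℕ) : ℝ) := ENNReal.rpow_le_rpow hC2 (Nat.cast_nonneg k)
      _ ≤ C ^ (q * ((k : ℝ) + l)) := by
          refine ENNReal.rpow_le_rpow_of_exponent_le hC1 ?_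
          have hk0 : (0 : ℝ) ≤ (k : ℝ) := Nat.cast_nonneg k
          have hl0 : (0 : ℝ) ≤ (l : ℝ) := Nat.cast_nonneg l
          nlinarith [hq1]
      _ ≤ S (n k + l) := h6
  refine ENNReal.tendsto_nhds_top fun N => ?_
  filter_upwards [eventually_ge_atTop (max (max l 1) N)] with k hk
  have h2k := lower k (le_trans (le_max_left _ _) hk)
  have hNk : N < 2 ^ k :=
    lt_of_le_of_lt (le_trans (le_max_right _ _) hk) (Nat.lt_two_pow_self)
  have hcast : ((N : ℕ) : ℝ≥0∞) < (2 : ℝ≥0∞) ^ k := by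
    calc ((N : ℕ) : ℝ≥0∞) < ((2 ^ k : ℕ) : ℝ≥0∞) := by exact_mod_cast hNk
      _ = (2 : ℝ≥0∞) ^ k := by push_cast; ring
  exact lt_of_lt_of_le hcast h2k
end

section
/- Let $(V,E)$ be a rooted directed tree, $\mu$ a weight, $1<p<\infty$, and suppose the backward shift $B$ is bounded on $\ell^p(V,\mu)$. If some orbit of $B$ has a nonzero weak limit point, then there exist a vertex $v_0\in V$ and an increasing sequence $(n_k)$ of positive integers such that $\sum_{u\in\mathrm{Chi}^{n_k}(v_0)}|\mu_u|^{-p^*}\to+\infty$ as $k\to\infty$. -/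
open scoped ENNReal NNReal

open Filter

section aux

variable {V : Type*} {E : V → V → Prop}

lemma mem_chiIter_zero {v w : V} : w ∈ chiIter E 0 v ↔ w = v := Iff.rfl

lemma mem_chiIter_succ {m : ℕ} {v w : V} :
    w ∈ chiIter E (m + 1) v ↔ ∃ x, E v x ∧ w ∈ chiIter E m x := Iff.rfl

lemma chiIter_succ_iff : ∀ {m : ℕ} {v w : V},
    w ∈ chiIter E (m + 1) v ↔ ∃ x, x ∈ chiIter E m v ∧ E x w := by
  intro m
  induction m with
  | zero =>
    intro v w
    constructor
    · rintro ⟨x, hvx, hwx⟩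
      rw [mem_chiIter_zero] at hwx
      subst hwx
      exact ⟨v, rfl, hvx⟩
    · rintro ⟨x, hx, hxw⟩
      rw [mem_chiIter_zero] at hx
      subst hx
      exact ⟨w, hxw, rfl⟩
  | succ m ih =>
    intro v w
    constructor
    · rintro ⟨u, hvu, hw⟩
      rcases ih.1 hw with ⟨x, hx, hxw⟩
      exact ⟨x, ⟨u, hvu, hx⟩, hxw⟩
    · rintro ⟨x, ⟨u, hvu, hx⟩, hxw⟩
      exact ⟨u, hvu, ih.2 ⟨x, hx, hxw⟩⟩

lemma ancestor_unique (hT : DirTree E) :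
    ∀ (m : ℕ) {u₁ u₂ w : V}, w ∈ chiIter E m u₁ → w ∈ chiIter E m u₂ → u₁ = u₂
  | 0, u₁, u₂, w, h₁, h₂ => by
      rw [mem_chiIter_zero] at h₁ h₂
      rw [← h₁, ← h₂]
  | (m + 1), u₁, u₂, w, h₁, h₂ => by
      obtain ⟨x₁, hE₁, hx₁⟩ := h₁
      obtain ⟨x₂, hE₂, hx₂⟩ := h₂
      obtain rfl := ancestor_unique hT m hx₁ hx₂
      exact hT.uniqueParent x₁ u₁ u₂ hE₁ hE₂

lemma depth_unique (hT : DirTree E) {o : V} (ho : ∀ u, ¬ E u o) :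
    ∀ (m₁ m₂ : ℕ) {w : V}, w ∈ chiIter E m₁ o → w ∈ chiIter E m₂ o → m₁ = m₂
  | 0, 0, w, _, _ => rfl
  | 0, (m₂ + 1), w, h₁, h₂ => by
      rw [mem_chiIter_zero] at h₁
      subst h₁
      obtain ⟨x, -, hxw⟩ := chiIter_succ_iff.1 h₂
      exact absurd hxw (ho x)
  | (m₁ + 1), 0, w, h₁, h₂ => by
      rw [mem_chiIter_zero] at h₂
      subst h₂
      obtain ⟨x, -, hxw⟩ := chiIter_succ_iff.1 h₁
      exact absurd hxw (ho x)
  | (m₁ + 1), (m₂ + 1), w, h₁, h₂ => by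
      obtain ⟨x₁, hx₁, hE₁⟩ := chiIter_succ_iff.1 h₁
      obtain ⟨x₂, hx₂, hE₂⟩ := chiIter_succ_iff.1 h₂
      obtain rfl : x₁ = x₂ := hT.uniqueParent w x₁ x₂ hE₁ hE₂
      rw [depth_unique hT ho m₁ m₂ hx₁ hx₂]

lemma chiIter_comp : ∀ {a b : ℕ} {v u w : V},
    u ∈ chiIter E a v → w ∈ chiIter E b u → w ∈ chiIter E (a + b) v
  | 0, b, v, u, w, h₁, h₂ => by
      rw [mem_chiIter_zero] at h₁
      subst h₁
      rwa [zero_add]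
  | (a + 1), b, v, u, w, h₁, h₂ => by
      obtain ⟨x, hvx, hx⟩ := h₁
      have h3 := chiIter_comp hx h₂
      have : a + 1 + b = (a + b) + 1 := by omega
      rw [this]
      exact ⟨x, hvx, h3⟩

lemma tsum_chiIter_succ (hT : DirTree E) (v : V) (m : ℕ) (h : V → ℝ≥0∞) :
    ∑' u : {u // E v u}, ∑' w : chiIter E m u.1, h w = ∑' w : chiIter E (m + 1) v, h w := by
  have key : ∀ w : V, ∑' u : {u // E v u}, (chiIter E m u.1).indicator h w
      = (chiIter E (m + 1) v).indicator h w := by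
    intro w
    by_cases hw : w ∈ chiIter E (m + 1) v
    · obtain ⟨u₀, hu₀, hw₀⟩ := hw
      have hw' : w ∈ chiIter E (m + 1) v := ⟨u₀, hu₀, hw₀⟩
      rw [Set.indicator_of_mem hw' h,
        tsum_eq_single (⟨u₀, hu₀⟩ : {u // E v u}) ?_]
      · exact Set.indicator_of_mem hw₀ h
      · rintro ⟨u, hu⟩ hne
        apply Set.indicator_of_notMem
        intro hmem
        exact hne (Subtype.ext (ancestor_unique hT m hmem hw₀))
    · rw [Set.indicator_of_notMem hw, ENNReal.tsum_eq_zero]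
      rintro ⟨u, hu⟩
      apply Set.indicator_of_notMem
      intro hmem
      exact hw ⟨u, hu, hmem⟩
  calc ∑' u : {u // E v u}, ∑' w : chiIter E m u.1, h w
      = ∑' (u : {u // E v u}) (w : V), (chiIter E m u.1).indicator h w := by
        exact tsum_congr fun u => tsum_subtype _ _
    _ = ∑' (w : V) (u : {u // E v u}), (chiIter E m u.1).indicator h w := ENNReal.tsum_comm
    _ = ∑' w : V, (chiIter E (m + 1) v).indicator h w := tsum_congr key
    _ = ∑' w : chiIter E (m + 1) v, h w := (tsum_subtype _ _).symm

lemma enorm_tsum_le' {ι : Type*} {𝕜 : Type*} [RCLike 𝕜] (g : ι → 𝕜) :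
    (‖∑' i, g i‖₊ : ℝ≥0∞) ≤ ∑' i, (‖g i‖₊ : ℝ≥0∞) := by
  by_cases hs : Summable fun i => ‖g i‖₊
  · rw [← ENNReal.coe_tsum hs]
    exact ENNReal.coe_le_coe.2 (nnnorm_tsum_le hs)
  · have : ∑' i, (‖g i‖₊ : ℝ≥0∞) = ⊤ := by
      by_contra h
      exact hs (ENNReal.tsum_coe_ne_top_iff_summable.1 h)
    simp [this]

lemma Bop_iter_le {V 𝕜 : Type*} [RCLike 𝕜] {E : V → V → Prop} (hT : DirTree E) (f : V → 𝕜) :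
    ∀ (m : ℕ) (v : V), (‖(Bop E)^[m] f v‖₊ : ℝ≥0∞) ≤ ∑' w : chiIter E m v, (‖f w.1‖₊ : ℝ≥0∞)
  | 0, v => by
      simp only [Function.iterate_zero, id]
      exact le_of_eq (tsum_singleton v (fun w => (‖f w‖₊ : ℝ≥0∞))).symm
  | (m + 1), v => by
      rw [Function.iterate_succ_apply']
      calc (‖Bop E ((Bop E)^[m] f) v‖₊ : ℝ≥0∞)
          ≤ ∑' u : {u // E v u}, (‖(Bop E)^[m] f u.1‖₊ : ℝ≥0∞) := enorm_tsum_le' _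
        _ ≤ ∑' u : {u // E v u}, ∑' w : chiIter E m u.1, (‖f w.1‖₊ : ℝ≥0∞) :=
            ENNReal.tsum_le_tsum fun u => Bop_iter_le hT f m u.1
        _ = ∑' w : chiIter E (m + 1) v, (‖f w.1‖₊ : ℝ≥0∞) :=
            tsum_chiIter_succ hT v m (fun w => (‖f w‖₊ : ℝ≥0∞))

open MeasureTheory in
lemma holder_tsum {V 𝕜 : Type*} [RCLike 𝕜] (μ f : V → 𝕜) (hμ : ∀ w, μ w ≠ 0)
    {p q : ℝ} (hpq : p.HolderConjugate q) (s : Set V) :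
    ∑' u : s, (‖f u.1‖₊ : ℝ≥0∞) ≤
      (∑' u : s, (‖f u.1 * μ u.1‖₊ : ℝ≥0∞) ^ p) ^ (1 / p) *
      (∑' u : s, (‖μ u.1‖₊ : ℝ≥0∞) ^ (-q)) ^ (1 / q) := by
  letI : MeasurableSpace s := ⊤
  haveI : MeasurableSingletonClass s := ⟨fun _ => trivial⟩
  set F : s → ℝ≥0∞ := fun u => (‖f u.1 * μ u.1‖₊ : ℝ≥0∞) with hF
  set G : s → ℝ≥0∞ := fun u => ((‖μ u.1‖₊ : ℝ≥0∞))⁻¹ with hG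
  have hFG : ∀ u : s, (‖f u.1‖₊ : ℝ≥0∞) = F u * G u := by
    intro u
    have h0 : (‖μ u.1‖₊ : ℝ≥0∞) ≠ 0 := by
      simp [hμ u.1]
    rw [hF, hG]
    dsimp only
    rw [nnnorm_mul, ENNReal.coe_mul, mul_assoc,
      ENNReal.mul_inv_cancel h0 ENNReal.coe_ne_top, mul_one]
  have hmF : Measurable F := fun _ _ => trivial
  have hmG : Measurable G := fun _ _ => trivial
  have key := ENNReal.lintegral_mul_le_Lp_mul_Lq (Measure.count : Measure s) hpq
    hmF.aemeasurable hmG.aemeasurable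
  rw [lintegral_count, lintegral_count, lintegral_count] at key
  calc ∑' u : s, (‖f u.1‖₊ : ℝ≥0∞) = ∑' u : s, (F * G) u := by
        exact tsum_congr fun u => by rw [Pi.mul_apply]; exact hFG u
    _ ≤ (∑' u : s, F u ^ p) ^ (1 / p) * (∑' u : s, G u ^ q) ^ (1 / q) := key
    _ = (∑' u : s, (‖f u.1 * μ u.1‖₊ : ℝ≥0∞) ^ p) ^ (1 / p) *
        (∑' u : s, (‖μ u.1‖₊ : ℝ≥0∞) ^ (-q)) ^ (1 / q) := by
        congr 2
        exact tsum_congr fun u => by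
          rw [hG]; dsimp only; rw [ENNReal.inv_rpow, ← ENNReal.rpow_neg]

end aux

/-- If some orbit of the backward shift on `ℓ^p` over a rooted directed tree has a
nonzero weak limit point (weak convergence tested against the dual
`ℓ^{p*}(V, 1/μ)` via the pairing `⟨f, φ⟩ = ∑_v f(v) φ(v)`), then there exist a
vertex `v₀` and an increasing sequence `(n_k)` with
`∑_{u ∈ Chi^{n_k}(v₀)} |μ_u|^{-p*} → ∞`. -/
theorem stmt14 {V 𝕜 : Type*} [RCLike 𝕜] [Countable V] [Nonempty V]
    {E : V → V → Prop} (hT : DirTree E) (μ : V → 𝕜) (hμ : ∀ w, μ w ≠ 0)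
    (o : V) (ho : ∀ u, ¬ E u o) (hreach : ∀ w : V, ∃ m : ℕ, w ∈ chiIter E m o)
    (p : ℝ) (hp : 1 < p)
    (hB : ∃ C : ℝ≥0∞, C ≠ ⊤ ∧ ∀ f : V → 𝕜, pnorm μ p (Bop E f) ≤ C * pnorm μ p f)
    (f g : V → 𝕜) (hf : pnorm μ p f ≠ ⊤) (hg : pnorm μ p g ≠ ⊤) (hg0 : g ≠ 0)
    (n : ℕ → ℕ) (hmono : StrictMono n)
    (hweak : ∀ φ : V → 𝕜,
      (∑' v, ((‖φ v‖₊ : ℝ≥0∞) / ‖μ v‖₊) ^ (p / (p - 1))) ≠ ⊤ →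
      Tendsto (fun k => ∑' v, φ v * (Bop E)^[n k] f v) atTop
        (nhds (∑' v, φ v * g v))) :
    ∃ v₀ : V, ∃ N : ℕ → ℕ, StrictMono N ∧ (∀ k, 0 < N k) ∧
      Tendsto (fun k => ∑' u : chiIter E (N k) v₀,
        (‖μ u.1‖₊ : ℝ≥0∞) ^ (-(p / (p - 1)))) atTop (nhds ⊤) := by
  classical
  -- basic exponent facts
  set q : ℝ := p / (p - 1) with hqdef
  have hpq : p.HolderConjugate q := (Real.holderConjugate_iff_eq_conjExponent hp).2 rfl
  have hp0 : (0 : ℝ) < p := hpq.pos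
  have hq0 : (0 : ℝ) < q := hpq.symm.pos
  -- a vertex where g is nonzero
  obtain ⟨v₀, hv₀⟩ : ∃ v₀, g v₀ ≠ 0 := by
    by_contra hc
    push_neg at hc
    exact hg0 (funext hc)
  -- test functional
  set φ : V → 𝕜 := fun v => if v = v₀ then 1 else 0 with hφdef
  have hφsum : (∑' v, ((‖φ v‖₊ : ℝ≥0∞) / ‖μ v‖₊) ^ q) ≠ ⊤ := by
    rw [tsum_eq_single v₀ (fun v hv => by
      simp [hφdef, if_neg hv, ENNReal.zero_div, ENNReal.zero_rpow_of_pos hq0])]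
    apply ENNReal.rpow_ne_top_of_nonneg hq0.le
    simp [hφdef, ENNReal.div_eq_top, hμ v₀]
  have epair : ∀ h : V → 𝕜, ∑' v, φ v * h v = h v₀ := by
    intro h
    rw [tsum_eq_single v₀ (fun v hv => by simp [hφdef, if_neg hv])]
    simp [hφdef]
  have hlim : Tendsto (fun k => (Bop E)^[n k] f v₀) atTop (nhds (g v₀)) := by
    have := hweak φ hφsum
    rw [epair g] at this
    simpa only [epair] using this
  -- norm convergence, eventual lower bound
  set c : ℝ≥0∞ := (‖g v₀‖₊ : ℝ≥0∞) / 2 with hcdef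
  have hc0 : c ≠ 0 := by
    simp [hcdef, hv₀]
  have hctop : c ≠ ⊤ := by
    simp [hcdef, ENNReal.div_eq_top]
  have hnorm : Tendsto (fun k => ‖(Bop E)^[n k] f v₀‖) atTop (nhds ‖g v₀‖) := hlim.norm
  have hev : ∀ᶠ k in atTop, c ≤ (‖(Bop E)^[n k] f v₀‖₊ : ℝ≥0∞) := by
    have hgt : ‖g v₀‖ / 2 < ‖g v₀‖ := half_lt_self (norm_pos_iff.2 hv₀)
    filter_upwards [hnorm.eventually (eventually_gt_nhds hgt)] with k hk
    rw [hcdef]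
    rw [ENNReal.div_le_iff_le_mul (Or.inl two_ne_zero) (Or.inl ENNReal.ofNat_ne_top)]
    rw [← ENNReal.coe_ofNat, ← ENNReal.coe_mul, ENNReal.coe_le_coe]
    rw [← NNReal.coe_le_coe]
    push_cast
    linarith [hk]
  -- the ℓ^p mass sequences
  set A : ℕ → ℝ≥0∞ := fun m => ∑' u : chiIter E m v₀, (‖f u.1 * μ u.1‖₊ : ℝ≥0∞) ^ p with hAdef
  set S : ℕ → ℝ≥0∞ := fun m => ∑' u : chiIter E m v₀, (‖μ u.1‖₊ : ℝ≥0∞) ^ (-q) with hSdef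
  have htotal : (∑' v, (‖f v * μ v‖₊ : ℝ≥0∞) ^ p) ≠ ⊤ := by
    intro h
    apply hf
    rw [pnorm, h, ENNReal.top_rpow_of_pos (by positivity)]
  have hAsum : (∑' k, A (n k)) ≠ ⊤ := by
    obtain ⟨d, hd⟩ := hreach v₀
    set ι : (Σ k : ℕ, chiIter E (n k) v₀) → V := fun x => x.2.1 with hιdef
    have hinj : Function.Injective ι := by
      rintro ⟨k₁, w₁, hw₁⟩ ⟨k₂, w₂, hw₂⟩ hvw
      simp only [hιdef] at hvw
      subst hvw
      have h1 : w₁ ∈ chiIter E (d + n k₁) o := chiIter_comp hd hw₁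
      have h2 : w₁ ∈ chiIter E (d + n k₂) o := chiIter_comp hd hw₂
      have : k₁ = k₂ := hmono.injective (by
        have := depth_unique hT ho _ _ h1 h2
        omega)
      subst this
      rfl
    intro h
    apply htotal
    have hle := ENNReal.tsum_comp_le_tsum_of_injective hinj
      (fun v => (‖f v * μ v‖₊ : ℝ≥0∞) ^ p)
    rw [ENNReal.tsum_sigma'] at hle
    exact top_le_iff.1 (h ▸ hle)
  have hA0 : Tendsto (fun k => A (n k)) atTop (nhds 0) :=
    ENNReal.tendsto_atTop_zero_of_tsum_ne_top hAsum
  -- the key pointwise inequality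
  have hkey : ∀ k, c ≤ A (n k) ^ (1 / p) * S (n k) ^ (1 / q) ∨
      ¬ c ≤ (‖(Bop E)^[n k] f v₀‖₊ : ℝ≥0∞) := by
    intro k
    by_cases hk : c ≤ (‖(Bop E)^[n k] f v₀‖₊ : ℝ≥0∞)
    · left
      calc c ≤ (‖(Bop E)^[n k] f v₀‖₊ : ℝ≥0∞) := hk
        _ ≤ ∑' w : chiIter E (n k) v₀, (‖f w.1‖₊ : ℝ≥0∞) := Bop_iter_le hT f (n k) v₀
        _ ≤ A (n k) ^ (1 / p) * S (n k) ^ (1 / q) := holder_tsum μ f hμ hpq _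
    · right; exact hk
  -- lower bound on S
  have hSlb : ∀ᶠ k in atTop, (c / A (n k) ^ (1 / p)) ^ q ≤ S (n k) := by
    filter_upwards [hev] with k hk
    rcases hkey k with hineq | hbad
    · have hAne : A (n k) ≠ ⊤ := ENNReal.ne_top_of_tsum_ne_top hAsum k
      have hxne : A (n k) ^ (1 / p) ≠ ⊤ :=
        ENNReal.rpow_ne_top_of_nonneg (by positivity) hAne
      have hx0 : A (n k) ^ (1 / p) ≠ 0 := by
        intro h0
        rw [h0, zero_mul] at hineq
        exact hc0 (le_antisymm hineq zero_le)
      have hdiv : c / A (n k) ^ (1 / p) ≤ S (n k) ^ (1 / q) := by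
        rw [ENNReal.div_le_iff_le_mul (Or.inl hx0) (Or.inl hxne), mul_comm]
        exact hineq
      calc (c / A (n k) ^ (1 / p)) ^ q ≤ (S (n k) ^ (1 / q)) ^ q :=
            ENNReal.rpow_le_rpow hdiv hq0.le
        _ = S (n k) := by
            rw [← ENNReal.rpow_mul, one_div, inv_mul_cancel₀ hq0.ne', ENNReal.rpow_one]
    · exact absurd hk hbad
  -- the lower bound tends to ⊤
  have hlow : Tendsto (fun k => (c / A (n k) ^ (1 / p)) ^ q) atTop (nhds ⊤) := by
    have h1 : Tendsto (fun k => A (n k) ^ (1 / p)) atTop (nhds 0) := by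
      have := (ENNReal.continuous_rpow_const (y := 1 / p)).tendsto 0
      rw [ENNReal.zero_rpow_of_pos (by positivity)] at this
      exact this.comp hA0
    have h2 : Tendsto (fun k => (A (n k) ^ (1 / p))⁻¹) atTop (nhds ⊤) := by
      have := ENNReal.tendsto_inv_iff.2 h1
      rwa [ENNReal.inv_zero] at this
    have h3 : Tendsto (fun k => c / A (n k) ^ (1 / p)) atTop (nhds ⊤) := by
      have := ENNReal.Tendsto.const_mul (a := c) h2 (Or.inl ENNReal.top_ne_zero)
      rwa [ENNReal.mul_top hc0] at this
    have h4 := (ENNReal.continuous_rpow_const (y := q)).tendsto ⊤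
    rw [ENNReal.top_rpow_of_pos hq0] at h4
    exact h4.comp h3
  have hStop : Tendsto (fun k => S (n k)) atTop (nhds ⊤) :=
    tendsto_nhds_top_mono hlow hSlb
  -- conclude
  refine ⟨v₀, fun k => n (k + 1), hmono.comp fun a b h => by omega, fun k => ?_, ?_⟩
  · exact lt_of_le_of_lt (Nat.zero_le _) (hmono (Nat.succ_pos k))
  · exact hStop.comp (tendsto_add_atTop_nat 1)
end

section
/- Let $X$ be an infinite-dimensional Banach space, $T$ a bounded linear operator on $X$, and $\mathcal{F}$ a Furstenberg family on $\mathbb{N}_0$ such that $\widetilde{\mathcal{F}}$ is a filter. Suppose there exist dense subsets $X_0,Y_0\subset X$ and maps $I_n:X_0\to X$, $S_n:Y_0\to X$ ($n\in\mathbb{N}_0$) such that for all $x\in X_0$, $y\in Y_0$: $\mathcal{F}\text{-}\lim_n (I_n x, T^n I_n x)=(x,0)$ and $\mathcal{F}\text{-}\lim_n (S_n y, T^n S_n y)=(0,y)$. Then $T$ is $\widetilde{\mathcal{F}}$-transitive. -/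
open Set Filter

/-- `Ftilde F` is the family of sets `A ⊆ ℕ` such that for every `N` there is
`B ∈ F` with `(B + [-N, N]) ∩ ℕ ⊆ A`. -/
def Ftilde (F : Set (Set ℕ)) : Set (Set ℕ) :=
  {A | ∀ N : ℕ, ∃ B ∈ F, ∀ n ∈ B, ∀ m : ℕ, n ≤ m + N → m ≤ n + N → m ∈ A}

/-- The `F`-Transitivity Criterion: if `F` is a Furstenberg family such that
`Ftilde F` is a filter, and there are dense sets `X₀, Y₀` and maps `I_n, S_n`
with `F-lim (I_n x, T^n I_n x) = (x, 0)` and `F-lim (S_n y, T^n S_n y) = (0, y)`,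
then `T` is `Ftilde F`-transitive. -/
theorem stmt15 {X : Type*} [NormedAddCommGroup X] [NormedSpace ℝ X] [CompleteSpace X]
    (hdim : ¬ FiniteDimensional ℝ X)
    (T : X →L[ℝ] X) (F : Set (Set ℕ))
    (hFne : F.Nonempty) (hFinf : ∀ A ∈ F, A.Infinite)
    (hFup : ∀ A ∈ F, ∀ B : Set ℕ, A ⊆ B → B ∈ F)
    (htne : (Ftilde F).Nonempty) (htinf : ∀ A ∈ Ftilde F, A.Infinite)
    (htup : ∀ A ∈ Ftilde F, ∀ B : Set ℕ, A ⊆ B → B ∈ Ftilde F)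
    (htfilter : ∀ A ∈ Ftilde F, ∀ B ∈ Ftilde F, A ∩ B ∈ Ftilde F)
    (X₀ Y₀ : Set X) (hX₀ : Dense X₀) (hY₀ : Dense Y₀)
    (I S : ℕ → X → X)
    (hI : ∀ x ∈ X₀, ∀ W ∈ nhds ((x, (0 : X)) : X × X),
      {n : ℕ | (I n x, (T ^ n) (I n x)) ∈ W} ∈ F)
    (hS : ∀ y ∈ Y₀, ∀ W ∈ nhds (((0 : X), y) : X × X),
      {n : ℕ | (S n y, (T ^ n) (S n y)) ∈ W} ∈ F) :
    ∀ U V : Set X, IsOpen U → U.Nonempty → IsOpen V → V.Nonempty →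
      {n : ℕ | ((T ^ n) '' U ∩ V).Nonempty} ∈ Ftilde F := by
  intro U V hU hUne hV hVne
  -- the uniform bound `M` for the operator norm of `T`
  set M : ℝ := max 1 ‖T‖ with hMdef
  have hM1 : (1 : ℝ) ≤ M := le_max_left _ _
  have hM0 : (0 : ℝ) < M := lt_of_lt_of_le one_pos hM1
  have bound : ∀ (j : ℕ) (v : X), ‖(T ^ j) v‖ ≤ M ^ j * ‖v‖ := by
    intro j
    induction j with
    | zero => intro v; simp
    | succ j ih =>
      intro v
      have h1 : (T ^ (j + 1)) v = T ((T ^ j) v) := by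
        rw [pow_succ']; rfl
      rw [h1]
      calc ‖T ((T ^ j) v)‖ ≤ ‖T‖ * ‖(T ^ j) v‖ := T.le_opNorm _
        _ ≤ M * (M ^ j * ‖v‖) := by
            have h2 : ‖T‖ ≤ M := le_max_right _ _
            have h3 := ih v
            have h4 : (0:ℝ) ≤ ‖T‖ := norm_nonneg _
            nlinarith [norm_nonneg ((T ^ j) v), norm_nonneg v, pow_nonneg (le_of_lt hM0) j]
        _ = M ^ (j + 1) * ‖v‖ := by rw [pow_succ]; ring
  have hMpow_le : ∀ {a b : ℕ}, a ≤ b → M ^ a ≤ M ^ b := by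
    intro a b hab
    exact pow_le_pow_right₀ hM1 hab
  -- `T` has dense range
  have hdrT : DenseRange (T : X → X) := by
    have hsub : Y₀ ⊆ closure (Set.range (T : X → X)) := by
      intro y hy
      rw [Metric.mem_closure_iff]
      intro ε hε
      have hW : (fun p : X × X => p.2) ⁻¹' Metric.ball y ε ∈ nhds (((0 : X), y) : X × X) := by
        exact continuous_snd.continuousAt.preimage_mem_nhds (Metric.ball_mem_nhds _ hε)
      have hA := hS y hy _ hW
      obtain ⟨n, hnA, hn1⟩ := (hFinf _ hA).exists_gt 0
      refine ⟨(T ^ n) (S n y), ?_, ?_⟩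
      · obtain ⟨k, rfl⟩ : ∃ k, n = k + 1 := ⟨n - 1, by omega⟩
        have h1 : (T ^ (k + 1)) (S (k + 1) y) = T ((T ^ k) (S (k + 1) y)) := by
          rw [pow_succ']; rfl
        rw [h1]
        exact ⟨(T ^ k) (S (k + 1) y), rfl⟩
      · have : (T ^ n) (S n y) ∈ Metric.ball y ε := hnA
        rw [Metric.mem_ball] at this
        rw [dist_comm]
        exact this
    apply Dense.of_closure
    exact Dense.mono hsub hY₀
  have hdrN : ∀ N : ℕ, DenseRange ((T ^ N : X →L[ℝ] X) : X → X) := by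
    intro N
    induction N with
    | zero => simpa using denseRange_id
    | succ N ih =>
      have hco : ((T ^ (N + 1) : X →L[ℝ] X) : X → X) =
          ((T ^ N : X →L[ℝ] X) : X → X) ∘ (T : X → X) := by
        rw [pow_succ]; rfl
      rw [hco]
      exact DenseRange.comp ih hdrT (T ^ N).continuous
  have himg : ∀ (N : ℕ) (s : Set X), Dense s → Dense ((T ^ N : X →L[ℝ] X) '' s) := by
    intro N s hs
    exact (hdrN N).dense_image (T ^ N).continuous hs
  -- Key lemma for the `I` maps
  have keyI : ∀ (x : X) (α β : ℝ), 0 < α → 0 < β →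
      {m : ℕ | ∃ z : X, ‖z - x‖ < α ∧ ‖(T ^ m) z‖ < β} ∈ Ftilde F := by
    intro x α β hα hβ N
    set C : ℝ := M ^ (2 * N) with hCdef
    have hC1 : (1 : ℝ) ≤ C := by
      simpa using hMpow_le (Nat.zero_le (2 * N))
    have hC0 : (0 : ℝ) < C := lt_of_lt_of_le one_pos hC1
    obtain ⟨p, hp1, hp2⟩ := Metric.mem_closure_iff.mp ((himg N X₀ hX₀) x) (α / 2) (by positivity)
    obtain ⟨xt, hxt0, rfl⟩ := hp1
    have hxd : ‖(T ^ N) xt - x‖ < α / 2 := by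
      rw [← dist_eq_norm, dist_comm]; exact hp2
    have hWn : (Metric.ball xt (α / (2 * C)) ×ˢ Metric.ball (0 : X) (β / C)) ∈
        nhds ((xt, (0 : X)) : X × X) :=
      prod_mem_nhds (Metric.ball_mem_nhds _ (by positivity)) (Metric.ball_mem_nhds _ (by positivity))
    refine ⟨_, hI xt hxt0 _ hWn, ?_⟩
    intro n hn m hm1 hm2
    obtain ⟨hn1, hn2⟩ := hn
    rw [Metric.mem_ball, dist_eq_norm] at hn1
    rw [Metric.mem_ball, dist_zero_right] at hn2
    refine ⟨(T ^ N) (I n xt), ?_, ?_⟩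
    · have t1 : ‖(T ^ N) (I n xt) - (T ^ N) xt‖ < α / 2 := by
        rw [← map_sub]
        calc ‖(T ^ N) (I n xt - xt)‖ ≤ M ^ N * ‖I n xt - xt‖ := bound N _
          _ ≤ C * ‖I n xt - xt‖ :=
              mul_le_mul_of_nonneg_right (hMpow_le (by omega)) (norm_nonneg _)
          _ < C * (α / (2 * C)) := by
              exact mul_lt_mul_of_pos_left hn1 hC0
          _ = α / 2 := by field_simp
      calc ‖(T ^ N) (I n xt) - x‖
          ≤ ‖(T ^ N) (I n xt) - (T ^ N) xt‖ + ‖(T ^ N) xt - x‖ := by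
            have := dist_triangle ((T ^ N) (I n xt)) ((T ^ N) xt) x
            simpa [dist_eq_norm] using this
        _ < α / 2 + α / 2 := add_lt_add t1 hxd
        _ = α := by ring
    · set j : ℕ := m + N - n with hjdef
      have hj2 : j ≤ 2 * N := by omega
      have hsum : j + n = m + N := by omega
      have hz : (T ^ m) ((T ^ N) (I n xt)) = (T ^ j) ((T ^ n) (I n xt)) := by
        calc (T ^ m) ((T ^ N) (I n xt)) = (T ^ (m + N)) (I n xt) := by rw [pow_add]; rfl
          _ = (T ^ (j + n)) (I n xt) := by rw [hsum]
          _ = (T ^ j) ((T ^ n) (I n xt)) := by rw [pow_add]; rfl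
      rw [hz]
      calc ‖(T ^ j) ((T ^ n) (I n xt))‖ ≤ M ^ j * ‖(T ^ n) (I n xt)‖ := bound j _
        _ ≤ C * ‖(T ^ n) (I n xt)‖ :=
            mul_le_mul_of_nonneg_right (hMpow_le hj2) (norm_nonneg _)
        _ < C * (β / C) := mul_lt_mul_of_pos_left hn2 hC0
        _ = β := by field_simp
  -- Key lemma for the `S` maps
  have keyS : ∀ (y : X) (α β : ℝ), 0 < α → 0 < β →
      {m : ℕ | ∃ u : X, ‖u‖ < α ∧ ‖(T ^ m) u - y‖ < β} ∈ Ftilde F := by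
    intro y α β hα hβ N
    set C : ℝ := M ^ (2 * N) with hCdef
    have hC1 : (1 : ℝ) ≤ C := by
      simpa using hMpow_le (Nat.zero_le (2 * N))
    have hC0 : (0 : ℝ) < C := lt_of_lt_of_le one_pos hC1
    obtain ⟨p, hp1, hp2⟩ := Metric.mem_closure_iff.mp ((himg N Y₀ hY₀) y) (β / 2) (by positivity)
    obtain ⟨yt, hyt0, rfl⟩ := hp1
    have hyd : ‖(T ^ N) yt - y‖ < β / 2 := by
      rw [← dist_eq_norm, dist_comm]; exact hp2
    have hWn : (Metric.ball (0 : X) (α / C) ×ˢ Metric.ball yt (β / (2 * C))) ∈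
        nhds (((0 : X), yt) : X × X) :=
      prod_mem_nhds (Metric.ball_mem_nhds _ (by positivity)) (Metric.ball_mem_nhds _ (by positivity))
    refine ⟨_, hS yt hyt0 _ hWn, ?_⟩
    intro n hn m hm1 hm2
    obtain ⟨hn1, hn2⟩ := hn
    rw [Metric.mem_ball, dist_zero_right] at hn1
    rw [Metric.mem_ball, dist_eq_norm] at hn2
    set j : ℕ := n + N - m with hjdef
    have hj2 : j ≤ 2 * N := by omega
    have hsum : m + j = n + N := by omega
    refine ⟨(T ^ j) (S n yt), ?_, ?_⟩
    · calc ‖(T ^ j) (S n yt)‖ ≤ M ^ j * ‖S n yt‖ := bound j _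
        _ ≤ C * ‖S n yt‖ := mul_le_mul_of_nonneg_right (hMpow_le hj2) (norm_nonneg _)
        _ < C * (α / C) := mul_lt_mul_of_pos_left hn1 hC0
        _ = α := by field_simp
    · have hz : (T ^ m) ((T ^ j) (S n yt)) = (T ^ N) ((T ^ n) (S n yt)) := by
        calc (T ^ m) ((T ^ j) (S n yt)) = (T ^ (m + j)) (S n yt) := by rw [pow_add]; rfl
          _ = (T ^ (N + n)) (S n yt) := by rw [hsum, Nat.add_comm n N]
          _ = (T ^ N) ((T ^ n) (S n yt)) := by rw [pow_add]; rfl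
      rw [hz]
      have t1 : ‖(T ^ N) ((T ^ n) (S n yt)) - (T ^ N) yt‖ < β / 2 := by
        rw [← map_sub]
        calc ‖(T ^ N) ((T ^ n) (S n yt) - yt)‖ ≤ M ^ N * ‖(T ^ n) (S n yt) - yt‖ := bound N _
          _ ≤ C * ‖(T ^ n) (S n yt) - yt‖ :=
              mul_le_mul_of_nonneg_right (hMpow_le (by omega)) (norm_nonneg _)
          _ < C * (β / (2 * C)) := mul_lt_mul_of_pos_left hn2 hC0
          _ = β / 2 := by field_simp
      calc ‖(T ^ N) ((T ^ n) (S n yt)) - y‖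
          ≤ ‖(T ^ N) ((T ^ n) (S n yt)) - (T ^ N) yt‖ + ‖(T ^ N) yt - y‖ := by
            have := dist_triangle ((T ^ N) ((T ^ n) (S n yt))) ((T ^ N) yt) y
            simpa [dist_eq_norm] using this
        _ < β / 2 + β / 2 := add_lt_add t1 hyd
        _ = β := by ring
  -- Assemble
  obtain ⟨x, hxU⟩ := hUne
  obtain ⟨y, hyV⟩ := hVne
  obtain ⟨δ, hδ0, hδU⟩ := Metric.isOpen_iff.mp hU x hxU
  obtain ⟨ε, hε0, hεV⟩ := Metric.isOpen_iff.mp hV y hyV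
  have hA1 := keyI x (δ / 2) (ε / 2) (by positivity) (by positivity)
  have hA2 := keyS y (δ / 2) (ε / 2) (by positivity) (by positivity)
  refine htup _ (htfilter _ hA1 _ hA2) _ ?_
  rintro m ⟨⟨z, hz1, hz2⟩, ⟨u, hu1, hu2⟩⟩
  have hwU : z + u ∈ U := by
    apply hδU
    rw [Metric.mem_ball, dist_eq_norm]
    have e : z + u - x = (z - x) + u := by abel
    rw [e]
    calc ‖(z - x) + u‖ ≤ ‖z - x‖ + ‖u‖ := norm_add_le _ _
      _ < δ / 2 + δ / 2 := add_lt_add hz1 hu1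
      _ = δ := by ring
  have hwV : (T ^ m) (z + u) ∈ V := by
    apply hεV
    rw [Metric.mem_ball, dist_eq_norm, map_add]
    have e : (T ^ m) z + (T ^ m) u - y = (T ^ m) z + ((T ^ m) u - y) := by abel
    rw [e]
    calc ‖(T ^ m) z + ((T ^ m) u - y)‖ ≤ ‖(T ^ m) z‖ + ‖(T ^ m) u - y‖ := norm_add_le _ _
      _ < ε / 2 + ε / 2 := add_lt_add hz2 hu2
      _ = ε := by ring
  exact ⟨(T ^ m) (z + u), ⟨z + u, hwU, rfl⟩, hwV⟩
end

section
/- Consider the rooted directed tree with root $\mathrm{o}$ having two children $u_1$ and $v_1$, each vertex $u_k$ having one child $u_{k+1}$ and each $v_k$ one child $v_{k+1}$. Define a weight $\mu$ with $\mu_{\mathrm{o}}=1$, $\mu_{u_k}=1/\mu_{v_k}$, and $(\mu_{v_k})_{k\geq1}$ given in consecutive blocks of lengths $2m_1,2m_2,\dots$ by $(1/2,\dots,1/2^{m_1},2/2^{m_1},\dots,1/2,1,\;2,\dots,2^{m_2},2^{m_2}/2,\dots,2,1,\dots)$ for a strictly increasing sequence $(m_k)$ of positive integers. Then for $1<p<\infty$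 the backward shift $B$ is bounded on $\ell^p(V,\mu)$ with $\|B\|=(2^{p^*}+2^{-p^*})^{1/p^*}$, and for every $k\geq1$ and $N\in\mathbb{N}$ the sets $\{n: 1/|\mu_{v_{k+n}}|>N\}$ and $\{n: 1/|\mu_{u_{k+n}}|>N\}$ are disjoint; in particular $B$ is not hypercyclic. -/
open scoped ENNReal NNReal

/-- Vertices of the rooted tree: a root with two infinite branches.
`u k` denotes `u_{k+1}` and `v k` denotes `v_{k+1}`. -/
inductive V16 where
  | root : V16
  | u : ℕ → V16
  | v : ℕ → V16

/-- Edges of the rooted tree: `root → u₁`, `root → v₁`, `u_k → u_{k+1}`,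
`v_k → v_{k+1}`. -/
inductive E16 : V16 → V16 → Prop where
  | ru : E16 .root (.u 0)
  | rv : E16 .root (.v 0)
  | uu (k : ℕ) : E16 (.u k) (.u (k + 1))
  | vv (k : ℕ) : E16 (.v k) (.v (k + 1))

/-- The weight determined by a sequence of exponents `e`:
`μ_root = 1`, `μ_{v_k} = 2^{e k}` and `μ_{u_k} = 1/μ_{v_k} = 2^{-e k}`. -/
noncomputable def mu16 (e : ℕ → ℤ) : V16 → ℝ
  | .root => 1
  | .v k => 2 ^ e (k + 1)
  | .u k => 2 ^ (-e (k + 1))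

private lemma childu {k : ℕ} {x : V16} (h : E16 (.u k) x) : x = .u (k+1) := by
  cases h; rfl

private lemma childv {k : ℕ} {x : V16} (h : E16 (.v k) x) : x = .v (k+1) := by
  cases h; rfl

lemma Bop_u (f : V16 → ℝ) (k : ℕ) : Bop E16 f (.u k) = f (.u (k+1)) := by
  show (∑' x : {x // E16 (.u k) x}, f x.val) = _
  exact tsum_eq_single (⟨.u (k+1), E16.uu k⟩ : {x // E16 (.u k) x})
    (fun b' hb' => absurd (Subtype.ext (childu b'.2)) hb')

lemma Bop_v (f : V16 → ℝ) (k : ℕ) : Bop E16 f (.v k) = f (.v (k+1)) := by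
  show (∑' x : {x // E16 (.v k) x}, f x.val) = _
  exact tsum_eq_single (⟨.v (k+1), E16.vv k⟩ : {x // E16 (.v k) x})
    (fun b' hb' => absurd (Subtype.ext (childv b'.2)) hb')

def rootChildEquiv : Bool ≃ {x // E16 .root x} where
  toFun b := Bool.rec ⟨.u 0, E16.ru⟩ ⟨.v 0, E16.rv⟩ b
  invFun x := match x with
    | ⟨.v _, _⟩ => true
    | _ => false
  left_inv b := by cases b <;> rfl
  right_inv := by rintro ⟨x, hx⟩; cases hx <;> rfl

lemma Bop_root (f : V16 → ℝ) : Bop E16 f .root = f (.u 0) + f (.v 0) := by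
  show (∑' x : {x // E16 .root x}, f x.val) = _
  rw [← rootChildEquiv.tsum_eq, tsum_bool]
  rfl

def v16Equiv : V16 ≃ ℕ where
  toFun w := match w with
    | .root => 0
    | .u k => 2*k+1
    | .v k => 2*k+2
  invFun n := match n with
    | 0 => .root
    | (n+1) => if n % 2 = 0 then .u (n/2) else .v (n/2)
  left_inv := by
    rintro (_|k|k)
    · rfl
    · show (if (2*k) % 2 = 0 then V16.u ((2*k)/2) else V16.v ((2*k)/2)) = _
      rw [if_pos (by omega)]
      congr 1; omega
    · show (if (2*k+1) % 2 = 0 then V16.u ((2*k+1)/2) else V16.v ((2*k+1)/2)) = _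
      rw [if_neg (by omega)]
      congr 1; omega
  right_inv := by
    intro n
    match n with
    | 0 => rfl
    | (n+1) =>
      rcases Nat.even_or_odd n with ⟨k, hk⟩ | ⟨k, hk⟩
      · have h2 : n % 2 = 0 := by omega
        show (fun w => match w with
            | V16.root => 0 | V16.u k => 2*k+1 | V16.v k => 2*k+2)
            (if n % 2 = 0 then V16.u (n/2) else V16.v (n/2)) = n+1
        rw [if_pos h2]
        show 2*(n/2)+1 = n+1
        omega
      · have h2 : ¬ (n % 2 = 0) := by omega
        show (fun w => match w with
            | V16.root => 0 | V16.u k => 2*k+1 | V16.v k => 2*k+2)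
            (if n % 2 = 0 then V16.u (n/2) else V16.v (n/2)) = n+1
        rw [if_neg h2]
        show 2*(n/2)+2 = n+1
        omega

lemma symm_u (k : ℕ) : v16Equiv.symm (2*k+1) = V16.u k := by
  show (if (2*k) % 2 = 0 then V16.u ((2*k)/2) else V16.v ((2*k)/2)) = _
  rw [if_pos (by omega)]; congr 1; omega

lemma symm_v (k : ℕ) : v16Equiv.symm (2*k+2) = V16.v k := by
  show (if (2*k+1) % 2 = 0 then V16.u ((2*k+1)/2) else V16.v ((2*k+1)/2)) = _
  rw [if_neg (by omega)]; congr 1; omega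

lemma tsum_V16 (h : V16 → ℝ≥0∞) :
    ∑' w, h w = h .root + ((∑' k, h (.u k)) + (∑' k, h (.v k))) := by
  rw [← v16Equiv.symm.tsum_eq h, tsum_eq_zero_add' ENNReal.summable]
  congr 1
  rw [← tsum_even_add_odd (f := fun n => h (v16Equiv.symm (n+1)))
    ENNReal.summable ENNReal.summable]
  congr 1
  · exact tsum_congr fun k => by rw [show 2*k+1 = 2*k+1 from rfl, symm_u]
  · exact tsum_congr fun k => by rw [show (2*k+1)+1 = 2*k+2 from rfl, symm_v]

section Eseq
variable (m : ℕ → ℕ) (b : ℕ → ℕ) (e : ℕ → ℤ)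

lemma block16 (hmpos : ∀ k, 1 ≤ k → 0 < m k) (hb0 : b 0 = 0)
    (hb : ∀ j, b (j + 1) = b j + 2 * m (j + 1)) :
    ∀ n, 1 ≤ n → ∃ j i, 1 ≤ i ∧ i ≤ 2 * m (j+1) ∧ n = b j + i := by
  intro n hn
  induction n with
  | zero => omega
  | succ n ih =>
    rcases Nat.eq_zero_or_pos n with rfl | hn'
    · refine ⟨0, 1, le_rfl, ?_, ?_⟩
      · have h5 : 0 < m (0+1) := hmpos 1 le_rfl; omega
      · rw [hb0]
    · obtain ⟨j, i, h1, h2, h3⟩ := ih hn'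
      rcases lt_or_eq_of_le h2 with h | h
      · exact ⟨j, i+1, by omega, by omega, by omega⟩
      · refine ⟨j+1, 1, le_rfl, ?_, ?_⟩
        · have h5 : 0 < m (j+1+1) := hmpos (j+2) (by omega); omega
        · have h6 := hb j; omega

lemma e16_one (hmpos : ∀ k, 1 ≤ k → 0 < m k) (hb0 : b 0 = 0)
    (he : ∀ j i : ℕ, 1 ≤ i → i ≤ m (j + 1) →
      e (b j + i) = (if Even j then (-1 : ℤ) else 1) * (i : ℤ) ∧
      e (b j + m (j + 1) + i) = (if Even j then (-1 : ℤ) else 1) * ((m (j + 1) : ℤ) - (i : ℤ))) :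
    e 1 = -1 := by
  have h := (he 0 1 le_rfl (hmpos 1 le_rfl)).1
  rw [hb0] at h
  simpa using h

lemma e16_step (hmpos : ∀ k, 1 ≤ k → 0 < m k) (hb0 : b 0 = 0)
    (hb : ∀ j, b (j + 1) = b j + 2 * m (j + 1))
    (he : ∀ j i : ℕ, 1 ≤ i → i ≤ m (j + 1) →
      e (b j + i) = (if Even j then (-1 : ℤ) else 1) * (i : ℤ) ∧
      e (b j + m (j + 1) + i) = (if Even j then (-1 : ℤ) else 1) * ((m (j + 1) : ℤ) - (i : ℤ))) :
    ∀ n, 1 ≤ n → e (n+1) ≤ e n + 1 ∧ e n ≤ e (n+1) + 1 := by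
  intro n hn
  obtain ⟨j, i, h1, h2, rfl⟩ := block16 m b hmpos hb0 hb n hn
  have hM1 : 1 ≤ m (j+1) := hmpos (j+1) (by omega)
  rcases lt_or_ge i (m (j+1)) with hi | hi
  · have hn1 := (he j i h1 (by omega)).1
    have hn2 := (he j (i+1) (by omega) (by omega)).1
    rw [show b j + i + 1 = b j + (i+1) from by omega, hn2]
    rw [hn1]
    rcases Nat.even_or_odd j with hj | hj
    · simp only [if_pos hj]; omega
    · simp only [if_neg (Nat.not_even_iff_odd.mpr hj)]; omega
  · rcases eq_or_lt_of_le hi with heq | hgt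
    · obtain rfl : i = m (j+1) := heq.symm
      have hn1 := (he j (m (j+1)) hM1 le_rfl).1
      have hn2 := (he j 1 le_rfl hM1).2
      rw [hn1, hn2]
      rcases Nat.even_or_odd j with hj | hj
      · simp only [if_pos hj]; omega
      · simp only [if_neg (Nat.not_even_iff_odd.mpr hj)]; omega
    · rcases lt_or_eq_of_le h2 with hlt | hE
      · have hn1 := (he j (i - m (j+1)) (by omega) (by omega)).2
        rw [show b j + m (j+1) + (i - m (j+1)) = b j + i from by omega] at hn1
        have hn2 := (he j (i - m (j+1) + 1) (by omega) (by omega)).2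
        rw [show b j + m (j+1) + (i - m (j+1) + 1) = b j + i + 1 from by omega] at hn2
        rw [hn1, hn2]
        rcases Nat.even_or_odd j with hj | hj
        · simp only [if_pos hj]; omega
        · simp only [if_neg (Nat.not_even_iff_odd.mpr hj)]; omega
      · have hn1 := (he j (m (j+1)) hM1 le_rfl).2
        rw [show b j + m (j+1) + m (j+1) = b j + i from by omega] at hn1
        have hn2 := (he (j+1) 1 le_rfl (hmpos (j+2) (by omega))).1
        rw [hb] at hn2
        rw [show b j + 2 * m (j+1) + 1 = b j + i + 1 from by omega] at hn2
        rw [hn1, hn2]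
        rcases Nat.even_or_odd j with hj | hj
        · have hj1 : ¬ Even (j+1) := by simp [Nat.even_add_one, hj]
          simp only [if_pos hj, if_neg hj1]; omega
        · have hj1 : Even (j+1) := Odd.add_one hj
          simp only [if_neg (Nat.not_even_iff_odd.mpr hj), if_pos hj1]; omega

end Eseq

lemma le_pnorm16 {p : ℝ} (hp : 0 < p) (μ f : V16 → ℝ) (w : V16) :
    (‖f w * μ w‖₊ : ℝ≥0∞) ≤ pnorm μ p f := by
  have h1 : ((‖f w * μ w‖₊ : ℝ≥0∞) ^ p) ^ (1/p) ≤ pnorm μ p f :=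
    ENNReal.rpow_le_rpow (ENNReal.le_tsum w) (by positivity)
  rwa [← ENNReal.rpow_mul, mul_one_div, div_self hp.ne', ENNReal.rpow_one] at h1

lemma hoelder16 {p q : ℝ} (hpq : p.HolderConjugate q) (A B : ℝ≥0) :
    (A + B) ^ p ≤ ((2:ℝ≥0) ^ q + (2:ℝ≥0)⁻¹ ^ q) ^ (p - 1) * ((2*A) ^ p + (B/2) ^ p) := by
  have h := NNReal.inner_le_Lp_mul_Lq (Finset.univ : Finset Bool)
    (fun b => Bool.rec (B/2) (2*A) b) (fun b => Bool.rec (2:ℝ≥0) 2⁻¹ b) hpq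
  rw [Fintype.sum_bool, Fintype.sum_bool, Fintype.sum_bool] at h
  have hsum : (2*A) * 2⁻¹ + (B/2) * 2 = A + B := by
    field_simp
  rw [hsum] at h
  have h2 := NNReal.rpow_le_rpow h hpq.nonneg
  calc (A + B) ^ p
      ≤ ((((2*A) ^ p + (B/2) ^ p) ^ (1/p)) * (((2:ℝ≥0)⁻¹ ^ q + 2 ^ q) ^ (1/q))) ^ p := h2
    _ = ((2:ℝ≥0) ^ q + (2:ℝ≥0)⁻¹ ^ q) ^ (p - 1) * ((2*A) ^ p + (B/2) ^ p) := by
        rw [NNReal.mul_rpow, ← NNReal.rpow_mul, ← NNReal.rpow_mul,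
          one_div_mul_cancel hpq.ne_zero, NNReal.rpow_one,
          show 1/q * p = p/q from by ring, hpq.div_conj_eq_sub_one, add_comm ((2:ℝ≥0)⁻¹ ^ q),
          mul_comm]

lemma iter_u16 (n : ℕ) : ∀ (f : V16 → ℝ) (k : ℕ), (Bop E16)^[n] f (.u k) = f (.u (k+n)) := by
  induction n with
  | zero => intro f k; rfl
  | succ n ih =>
    intro f k
    rw [Function.iterate_succ_apply, ih (Bop E16 f) k, Bop_u]
    rfl

lemma iter_v16 (n : ℕ) : ∀ (f : V16 → ℝ) (k : ℕ), (Bop E16)^[n] f (.v k) = f (.v (k+n)) := by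
  induction n with
  | zero => intro f k; rfl
  | succ n ih =>
    intro f k
    rw [Function.iterate_succ_apply, ih (Bop E16 f) k, Bop_v]
    rfl

lemma branch16 (c : ℝ) (x y : ℤ) (hxy : x ≤ y + 1) :
    ‖c * (2:ℝ) ^ x‖₊ ≤ 2 * ‖c * (2:ℝ) ^ y‖₊ := by
  rw [nnnorm_mul, nnnorm_mul, nnnorm_zpow, nnnorm_zpow, Real.nnnorm_two]
  calc ‖c‖₊ * (2:ℝ≥0) ^ x ≤ ‖c‖₊ * (2:ℝ≥0) ^ (y+1) :=
        mul_le_mul_right (zpow_le_zpow_right₀ one_le_two hxy) _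
    _ = 2 * (‖c‖₊ * (2:ℝ≥0) ^ y) := by
        rw [zpow_add₀ (by norm_num : (2:ℝ≥0) ≠ 0), zpow_one]; ring

lemma bound16 {p q : ℝ} (hpq : p.HolderConjugate q) (e : ℕ → ℤ)
    (he1 : e 1 = -1) (hstep : ∀ n, 1 ≤ n → e (n+1) ≤ e n + 1 ∧ e n ≤ e (n+1) + 1)
    (f : V16 → ℝ) :
    pnorm (mu16 e) p (Bop E16 f) ≤
      ((2 : ℝ≥0∞) ^ q + (2 : ℝ≥0∞) ^ (-q)) ^ (1/q) * pnorm (mu16 e) p f := by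
  have hp0 : 0 < p := hpq.pos
  have hq0 : 0 < q := hpq.symm.pos
  have hp1 : (0:ℝ) ≤ p - 1 := by linarith [hpq.lt]
  set K' : ℝ≥0 := 2 ^ q + 2⁻¹ ^ q with hK'
  have h2 : ((2:ℝ≥0):ℝ≥0∞) = 2 := by norm_num
  have hKcoe : ((K' : ℝ≥0) : ℝ≥0∞) = (2:ℝ≥0∞)^q + (2:ℝ≥0∞)^(-q) := by
    rw [hK', ENNReal.coe_add, ENNReal.coe_rpow_of_ne_zero (by norm_num : (2:ℝ≥0) ≠ 0),
      ENNReal.coe_rpow_of_ne_zero (by norm_num : (2:ℝ≥0)⁻¹ ≠ 0),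
      ENNReal.coe_inv (by norm_num), h2, ENNReal.inv_rpow, ← ENNReal.rpow_neg]
  set F : V16 → ℝ≥0∞ := fun w => (‖f w * mu16 e w‖₊ : ℝ≥0∞) ^ p with hF
  set G : V16 → ℝ≥0∞ := fun w => (‖Bop E16 f w * mu16 e w‖₊ : ℝ≥0∞) ^ p with hG
  have h2p : (2:ℝ≥0) ^ p ≤ K' ^ (p-1) := by
    have h1 : ((2:ℝ≥0) ^ q) ^ (p-1) ≤ K' ^ (p-1) :=
      NNReal.rpow_le_rpow (self_le_add_right _ _) hp1
    rwa [← NNReal.rpow_mul,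
      show q * (p-1) = p from by rw [mul_comm]; exact hpq.sub_one_mul_conj] at h1
  have hmu_u0 : mu16 e (V16.u 0) = 2 := by
    show (2:ℝ) ^ (-e 1) = 2
    rw [he1]; norm_num
  have hmu_v0 : mu16 e (V16.v 0) = 2⁻¹ := by
    show (2:ℝ) ^ (e 1) = 2⁻¹
    rw [he1]; norm_num
  -- root bound
  have hroot : G V16.root ≤ ((K' ^ (p-1) : ℝ≥0) : ℝ≥0∞) * (F (V16.u 0) + F (V16.v 0)) := by
    have hnn : ‖Bop E16 f V16.root * mu16 e V16.root‖₊ ≤ ‖f (V16.u 0)‖₊ + ‖f (V16.v 0)‖₊ := by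
      rw [Bop_root, show mu16 e V16.root = 1 from rfl, mul_one]
      exact nnnorm_add_le _ _
    have h1 : G V16.root ≤ ((‖f (V16.u 0)‖₊ + ‖f (V16.v 0)‖₊ : ℝ≥0) : ℝ≥0∞) ^ p :=
      ENNReal.rpow_le_rpow (ENNReal.coe_le_coe.mpr hnn) hp0.le
    refine h1.trans ?_
    have h3 := hoelder16 hpq (‖f (V16.u 0)‖₊) (‖f (V16.v 0)‖₊)
    have hu : (2 * ‖f (V16.u 0)‖₊) = ‖f (V16.u 0) * mu16 e (V16.u 0)‖₊ := by
      rw [hmu_u0, nnnorm_mul, Real.nnnorm_two, mul_comm]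
    have hv : (‖f (V16.v 0)‖₊ / 2) = ‖f (V16.v 0) * mu16 e (V16.v 0)‖₊ := by
      rw [hmu_v0, nnnorm_mul, nnnorm_inv, Real.nnnorm_two, div_eq_mul_inv]
    rw [hu, hv] at h3
    calc ((‖f (V16.u 0)‖₊ + ‖f (V16.v 0)‖₊ : ℝ≥0) : ℝ≥0∞) ^ p
        = (((‖f (V16.u 0)‖₊ + ‖f (V16.v 0)‖₊) ^ p : ℝ≥0) : ℝ≥0∞) := by
          rw [ENNReal.coe_rpow_of_nonneg _ hp0.le]
      _ ≤ ((K' ^ (p-1) * (‖f (V16.u 0) * mu16 e (V16.u 0)‖₊ ^ p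
            + ‖f (V16.v 0) * mu16 e (V16.v 0)‖₊ ^ p) : ℝ≥0) : ℝ≥0∞) :=
          ENNReal.coe_le_coe.mpr h3
      _ = ((K' ^ (p-1) : ℝ≥0) : ℝ≥0∞) * (F (V16.u 0) + F (V16.v 0)) := by
          rw [ENNReal.coe_mul, ENNReal.coe_add,
            ENNReal.coe_rpow_of_nonneg _ hp0.le, ENNReal.coe_rpow_of_nonneg _ hp0.le]
  -- branch bounds
  have hub : ∀ k, G (V16.u k) ≤ ((K' ^ (p-1) : ℝ≥0) : ℝ≥0∞) * F (V16.u (k+1)) := by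
    intro k
    have hb := branch16 (f (V16.u (k+1))) (-e (k+1)) (-e (k+2))
      (by have h : e (k+2) ≤ e (k+1) + 1 := (hstep (k+1) (by omega)).1; omega)
    have hG1 : G (V16.u k) = ((‖f (V16.u (k+1)) * (2:ℝ) ^ (-e (k+1))‖₊ : ℝ≥0∞)) ^ p := by
      rw [hG]
      show ((‖Bop E16 f (V16.u k) * mu16 e (V16.u k)‖₊ : ℝ≥0∞)) ^ p = _
      rw [Bop_u]
      rfl
    have hF1 : F (V16.u (k+1)) = ((‖f (V16.u (k+1)) * (2:ℝ) ^ (-e (k+2))‖₊ : ℝ≥0∞)) ^ p := rfl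
    rw [hG1, hF1]
    calc ((‖f (V16.u (k+1)) * (2:ℝ) ^ (-e (k+1))‖₊ : ℝ≥0∞)) ^ p
        ≤ ((2 * ‖f (V16.u (k+1)) * (2:ℝ) ^ (-e (k+2))‖₊ : ℝ≥0) : ℝ≥0∞) ^ p :=
          ENNReal.rpow_le_rpow (ENNReal.coe_le_coe.mpr hb) hp0.le
      _ = (((2 * ‖f (V16.u (k+1)) * (2:ℝ) ^ (-e (k+2))‖₊) ^ p : ℝ≥0) : ℝ≥0∞) := by
          rw [ENNReal.coe_rpow_of_nonneg _ hp0.le]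
      _ = (((2:ℝ≥0) ^ p * ‖f (V16.u (k+1)) * (2:ℝ) ^ (-e (k+2))‖₊ ^ p : ℝ≥0) : ℝ≥0∞) := by
          rw [NNReal.mul_rpow]
      _ ≤ ((K' ^ (p-1) * ‖f (V16.u (k+1)) * (2:ℝ) ^ (-e (k+2))‖₊ ^ p : ℝ≥0) : ℝ≥0∞) :=
          ENNReal.coe_le_coe.mpr (mul_le_mul_left h2p _)
      _ = ((K' ^ (p-1) : ℝ≥0) : ℝ≥0∞) * ((‖f (V16.u (k+1)) * (2:ℝ) ^ (-e (k+2))‖₊ : ℝ≥0∞)) ^ p := by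
          rw [ENNReal.coe_mul, ENNReal.coe_rpow_of_nonneg _ hp0.le]
  have hvb : ∀ k, G (V16.v k) ≤ ((K' ^ (p-1) : ℝ≥0) : ℝ≥0∞) * F (V16.v (k+1)) := by
    intro k
    have hb := branch16 (f (V16.v (k+1))) (e (k+1)) (e (k+2))
      (by have h : e (k+1) ≤ e (k+2) + 1 := (hstep (k+1) (by omega)).2; omega)
    have hG1 : G (V16.v k) = ((‖f (V16.v (k+1)) * (2:ℝ) ^ (e (k+1))‖₊ : ℝ≥0∞)) ^ p := by
      rw [hG]
      show ((‖Bop E16 f (V16.v k) * mu16 e (V16.v k)‖₊ : ℝ≥0∞)) ^ p = _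
      rw [Bop_v]
      rfl
    have hF1 : F (V16.v (k+1)) = ((‖f (V16.v (k+1)) * (2:ℝ) ^ (e (k+2))‖₊ : ℝ≥0∞)) ^ p := rfl
    rw [hG1, hF1]
    calc ((‖f (V16.v (k+1)) * (2:ℝ) ^ (e (k+1))‖₊ : ℝ≥0∞)) ^ p
        ≤ ((2 * ‖f (V16.v (k+1)) * (2:ℝ) ^ (e (k+2))‖₊ : ℝ≥0) : ℝ≥0∞) ^ p :=
          ENNReal.rpow_le_rpow (ENNReal.coe_le_coe.mpr hb) hp0.le
      _ = (((2 * ‖f (V16.v (k+1)) * (2:ℝ) ^ (e (k+2))‖₊) ^ p : ℝ≥0) : ℝ≥0∞) := by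
          rw [ENNReal.coe_rpow_of_nonneg _ hp0.le]
      _ = (((2:ℝ≥0) ^ p * ‖f (V16.v (k+1)) * (2:ℝ) ^ (e (k+2))‖₊ ^ p : ℝ≥0) : ℝ≥0∞) := by
          rw [NNReal.mul_rpow]
      _ ≤ ((K' ^ (p-1) * ‖f (V16.v (k+1)) * (2:ℝ) ^ (e (k+2))‖₊ ^ p : ℝ≥0) : ℝ≥0∞) :=
          ENNReal.coe_le_coe.mpr (mul_le_mul_left h2p _)
      _ = ((K' ^ (p-1) : ℝ≥0) : ℝ≥0∞) * ((‖f (V16.v (k+1)) * (2:ℝ) ^ (e (k+2))‖₊ : ℝ≥0∞)) ^ p := by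
          rw [ENNReal.coe_mul, ENNReal.coe_rpow_of_nonneg _ hp0.le]
  -- sum
  have hsum : ∑' w, G w ≤ ((K' ^ (p-1) : ℝ≥0) : ℝ≥0∞) * ∑' w, F w := by
    rw [tsum_V16 G, tsum_V16 F]
    calc G V16.root + ((∑' k, G (V16.u k)) + (∑' k, G (V16.v k)))
        ≤ ((K' ^ (p-1) : ℝ≥0) : ℝ≥0∞) * (F (V16.u 0) + F (V16.v 0)) +
          (((K' ^ (p-1) : ℝ≥0) : ℝ≥0∞) * ∑' k, F (V16.u (k+1)) +
           ((K' ^ (p-1) : ℝ≥0) : ℝ≥0∞) * ∑' k, F (V16.v (k+1))) := by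
          refine add_le_add hroot (add_le_add ?_ ?_)
          · rw [← ENNReal.tsum_mul_left]; exact ENNReal.tsum_le_tsum hub
          · rw [← ENNReal.tsum_mul_left]; exact ENNReal.tsum_le_tsum hvb
      _ = ((K' ^ (p-1) : ℝ≥0) : ℝ≥0∞) *
            ((F (V16.u 0) + ∑' k, F (V16.u (k+1))) + (F (V16.v 0) + ∑' k, F (V16.v (k+1)))) := by
          ring
      _ = ((K' ^ (p-1) : ℝ≥0) : ℝ≥0∞) * ((∑' k, F (V16.u k)) + (∑' k, F (V16.v k))) := by
          have hAu : (∑' k, F (V16.u k)) = F (V16.u 0) + ∑' k, F (V16.u (k+1)) :=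
            tsum_eq_zero_add' ENNReal.summable
          have hAv : (∑' k, F (V16.v k)) = F (V16.v 0) + ∑' k, F (V16.v (k+1)) :=
            tsum_eq_zero_add' ENNReal.summable
          rw [← hAu, ← hAv]
      _ ≤ ((K' ^ (p-1) : ℝ≥0) : ℝ≥0∞) *
            (F V16.root + ((∑' k, F (V16.u k)) + (∑' k, F (V16.v k)))) := by
          exact mul_le_mul_right le_add_self _
  -- conclude
  have hfinal := ENNReal.rpow_le_rpow hsum (by positivity : (0:ℝ) ≤ 1/p)
  rw [ENNReal.mul_rpow_of_nonneg _ _ (by positivity : (0:ℝ) ≤ 1/p)] at hfinal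
  have hexp : (p - 1) * (1 / p) = 1 / q := by
    have h1 := hpq.sub_one_mul_conj
    field_simp
    linarith [h1]
  have hC : (((K' ^ (p-1) : ℝ≥0) : ℝ≥0∞)) ^ (1/p)
      = ((2:ℝ≥0∞) ^ q + (2:ℝ≥0∞) ^ (-q)) ^ (1/q) := by
    rw [← hKcoe, ← ENNReal.coe_rpow_of_nonneg _ (by positivity : (0:ℝ) ≤ 1/p),
      ← NNReal.rpow_mul, hexp, ENNReal.coe_rpow_of_nonneg _ (by positivity : (0:ℝ) ≤ 1/q)]
  calc pnorm (mu16 e) p (Bop E16 f) = (∑' w, G w) ^ (1/p) := rfl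
    _ ≤ ((((K' ^ (p-1) : ℝ≥0) : ℝ≥0∞)) ^ (1/p)) * (∑' w, F w) ^ (1/p) := hfinal
    _ = ((2:ℝ≥0∞) ^ q + (2:ℝ≥0∞) ^ (-q)) ^ (1/q) * pnorm (mu16 e) p f := by
        rw [hC]; rfl

def f16 (a c : ℝ) : V16 → ℝ
  | .u 0 => a
  | .v 0 => c
  | _ => 0

lemma term_zero16 {p : ℝ} (hp : 0 < p) (c : ℝ) : ((‖(0:ℝ) * c‖₊ : ℝ≥0∞)) ^ p = 0 := by
  rw [zero_mul, nnnorm_zero, ENNReal.coe_zero, ENNReal.zero_rpow_of_pos hp]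

lemma Kcoe16 (q : ℝ) :
    (((2 ^ q + 2 ^ (-q) : ℝ≥0)) : ℝ≥0∞) = (2:ℝ≥0∞) ^ q + (2:ℝ≥0∞) ^ (-q) := by
  have h2 : ((2:ℝ≥0):ℝ≥0∞) = 2 := by norm_num
  rw [ENNReal.coe_add, ENNReal.coe_rpow_of_ne_zero (by norm_num : (2:ℝ≥0) ≠ 0),
    ENNReal.coe_rpow_of_ne_zero (by norm_num : (2:ℝ≥0) ≠ 0), h2]

lemma mu16_u0 {e : ℕ → ℤ} (he1 : e 1 = -1) : mu16 e (V16.u 0) = 2 := by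
  show (2:ℝ) ^ (-e 1) = 2
  rw [he1]; norm_num

lemma mu16_v0 {e : ℕ → ℤ} (he1 : e 1 = -1) : mu16 e (V16.v 0) = 2⁻¹ := by
  show (2:ℝ) ^ (e 1) = 2⁻¹
  rw [he1]; norm_num

lemma pnorm_f16_ne_top {p : ℝ} (hp : 0 < p) (μ : V16 → ℝ) (a c : ℝ) :
    pnorm μ p (f16 a c) ≠ ⊤ := by
  have hu : (∑' k, (‖f16 a c (V16.u k) * μ (V16.u k)‖₊ : ℝ≥0∞) ^ p)
      = (‖f16 a c (V16.u 0) * μ (V16.u 0)‖₊ : ℝ≥0∞) ^ p := by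
    apply tsum_eq_single
    intro k hk
    match k with
    | 0 => exact absurd rfl hk
    | (j+1) => exact term_zero16 hp _
  have hv : (∑' k, (‖f16 a c (V16.v k) * μ (V16.v k)‖₊ : ℝ≥0∞) ^ p)
      = (‖f16 a c (V16.v 0) * μ (V16.v 0)‖₊ : ℝ≥0∞) ^ p := by
    apply tsum_eq_single
    intro k hk
    match k with
    | 0 => exact absurd rfl hk
    | (j+1) => exact term_zero16 hp _
  have hT : (∑' w, (‖f16 a c w * μ w‖₊ : ℝ≥0∞) ^ p) ≠ ⊤ := by
    rw [tsum_V16 (fun w => (‖f16 a c w * μ w‖₊ : ℝ≥0∞) ^ p), hu, hv]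
    refine ENNReal.add_ne_top.mpr ⟨?_, ENNReal.add_ne_top.mpr ⟨?_, ?_⟩⟩ <;>
      exact ENNReal.rpow_ne_top_of_nonneg hp.le ENNReal.coe_ne_top
  exact ENNReal.rpow_ne_top_of_nonneg (one_div_nonneg.mpr hp.le) hT

lemma lower16 {p q : ℝ} (hpq : p.HolderConjugate q) (e : ℕ → ℤ) (he1 : e 1 = -1)
    {C : ℝ≥0∞} (hC : ∀ f : V16 → ℝ, pnorm (mu16 e) p (Bop E16 f) ≤ C * pnorm (mu16 e) p f) :
    ((2:ℝ≥0∞) ^ q + (2:ℝ≥0∞) ^ (-q)) ^ (1/q) ≤ C := by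
  have hp0 : 0 < p := hpq.pos
  have hq0 : 0 < q := hpq.symm.pos
  have hm := hpq.mul_eq_add
  set K : ℝ≥0 := 2 ^ q + 2 ^ (-q) with hK
  have hK0 : (0:ℝ≥0) < K := lt_of_lt_of_le (NNReal.rpow_pos (by norm_num)) (self_le_add_right _ _)
  set f0 : V16 → ℝ := f16 ((2:ℝ)^(-q)) ((2:ℝ)^q) with hf0
  -- norm of f0
  have hTu : (∑' k, (‖f0 (V16.u k) * mu16 e (V16.u k)‖₊ : ℝ≥0∞) ^ p)
      = (((2:ℝ≥0) ^ (-q) : ℝ≥0) : ℝ≥0∞) := by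
    have h1 : (∑' k, (‖f0 (V16.u k) * mu16 e (V16.u k)‖₊ : ℝ≥0∞) ^ p)
        = (‖f0 (V16.u 0) * mu16 e (V16.u 0)‖₊ : ℝ≥0∞) ^ p := by
      apply tsum_eq_single
      intro k hk
      match k with
      | 0 => exact absurd rfl hk
      | (j+1) => exact term_zero16 hp0 _
    rw [h1, show f0 (V16.u 0) = (2:ℝ)^(-q) from rfl, mu16_u0 he1]
    rw [nnnorm_mul, Real.nnnorm_rpow_of_nonneg (by norm_num), Real.nnnorm_two,
      ← ENNReal.coe_rpow_of_nonneg _ hp0.le]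
    congr 1
    rw [show ((2:ℝ≥0) ^ (-q) * 2) = 2 ^ (-q+1) from by
      rw [NNReal.rpow_add (by norm_num), NNReal.rpow_one]]
    rw [← NNReal.rpow_mul]
    congr 1
    linear_combination -hm
  have hTv : (∑' k, (‖f0 (V16.v k) * mu16 e (V16.v k)‖₊ : ℝ≥0∞) ^ p)
      = (((2:ℝ≥0) ^ q : ℝ≥0) : ℝ≥0∞) := by
    have h1 : (∑' k, (‖f0 (V16.v k) * mu16 e (V16.v k)‖₊ : ℝ≥0∞) ^ p)
        = (‖f0 (V16.v 0) * mu16 e (V16.v 0)‖₊ : ℝ≥0∞) ^ p := by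
      apply tsum_eq_single
      intro k hk
      match k with
      | 0 => exact absurd rfl hk
      | (j+1) => exact term_zero16 hp0 _
    rw [h1, show f0 (V16.v 0) = (2:ℝ)^q from rfl, mu16_v0 he1]
    rw [nnnorm_mul, Real.nnnorm_rpow_of_nonneg (by norm_num), Real.nnnorm_two,
      nnnorm_inv, Real.nnnorm_two, ← ENNReal.coe_rpow_of_nonneg _ hp0.le]
    congr 1
    rw [show ((2:ℝ≥0) ^ q * 2⁻¹) = 2 ^ (q + -1) from by
      rw [NNReal.rpow_add (by norm_num), NNReal.rpow_neg_one]]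
    rw [← NNReal.rpow_mul]
    congr 1
    linear_combination hm
  have hTf : (∑' w, (‖f0 w * mu16 e w‖₊ : ℝ≥0∞) ^ p) = ((K : ℝ≥0) : ℝ≥0∞) := by
    rw [tsum_V16 (fun w => (‖f0 w * mu16 e w‖₊ : ℝ≥0∞) ^ p), hTu, hTv,
      show f0 V16.root = (0:ℝ) from rfl, term_zero16 hp0 _, zero_add, hK,
      ENNReal.coe_add, add_comm]
  have hpnf : pnorm (mu16 e) p f0 = ((K : ℝ≥0) : ℝ≥0∞) ^ (1/p) := by
    show (∑' w, (‖f0 w * mu16 e w‖₊ : ℝ≥0∞) ^ p) ^ (1/p) = _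
    rw [hTf]
  -- norm of B f0
  have hnormsum : ‖(2:ℝ)^(-q) + (2:ℝ)^q‖₊ = K := by
    apply NNReal.coe_injective
    rw [coe_nnnorm, Real.norm_eq_abs, abs_of_nonneg (by positivity), hK,
      NNReal.coe_add, NNReal.coe_rpow, NNReal.coe_rpow]
    norm_num
    ring
  have hTB : (∑' w, (‖Bop E16 f0 w * mu16 e w‖₊ : ℝ≥0∞) ^ p) = ((K : ℝ≥0) : ℝ≥0∞) ^ (p:ℝ) := by
    rw [tsum_V16 (fun w => (‖Bop E16 f0 w * mu16 e w‖₊ : ℝ≥0∞) ^ p)]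
    have hr : (‖Bop E16 f0 V16.root * mu16 e V16.root‖₊ : ℝ≥0∞) ^ p
        = ((K : ℝ≥0) : ℝ≥0∞) ^ (p:ℝ) := by
      rw [Bop_root, show mu16 e V16.root = 1 from rfl, mul_one,
        show f0 (V16.u 0) = (2:ℝ)^(-q) from rfl, show f0 (V16.v 0) = (2:ℝ)^q from rfl,
        hnormsum]
    have hu0 : (∑' k, (‖Bop E16 f0 (V16.u k) * mu16 e (V16.u k)‖₊ : ℝ≥0∞) ^ p) = 0 := by
      rw [ENNReal.summable.tsum_eq_zero_iff]
      intro k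
      rw [Bop_u, show f0 (V16.u (k+1)) = (0:ℝ) from rfl]
      exact term_zero16 hp0 _
    have hv0 : (∑' k, (‖Bop E16 f0 (V16.v k) * mu16 e (V16.v k)‖₊ : ℝ≥0∞) ^ p) = 0 := by
      rw [ENNReal.summable.tsum_eq_zero_iff]
      intro k
      rw [Bop_v, show f0 (V16.v (k+1)) = (0:ℝ) from rfl]
      exact term_zero16 hp0 _
    rw [hr, hu0, hv0]
    simp
  have hpnB : pnorm (mu16 e) p (Bop E16 f0) = ((K : ℝ≥0) : ℝ≥0∞) := by
    show (∑' w, (‖Bop E16 f0 w * mu16 e w‖₊ : ℝ≥0∞) ^ p) ^ (1/p) = _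
    rw [hTB, ← ENNReal.rpow_mul, mul_one_div, div_self hp0.ne', ENNReal.rpow_one]
  have hCf := hC f0
  rw [hpnB, hpnf] at hCf
  have hsplit : ((K : ℝ≥0) : ℝ≥0∞) = ((K : ℝ≥0) : ℝ≥0∞) ^ (1/q) * ((K : ℝ≥0) : ℝ≥0∞) ^ (1/p) := by
    rw [← ENNReal.rpow_add _ _ (by exact_mod_cast hK0.ne') ENNReal.coe_ne_top,
      show 1/q + 1/p = 1 from by
        have h := hpq.inv_add_inv_eq_one
        rw [one_div, one_div]; linarith,
      ENNReal.rpow_one]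
  have hCf2 := hsplit.symm.trans_le hCf
  have hne0 : ((K : ℝ≥0) : ℝ≥0∞) ^ (1/p) ≠ 0 :=
    (ENNReal.rpow_pos (by exact_mod_cast hK0) ENNReal.coe_ne_top).ne'
  have hnetop : ((K : ℝ≥0) : ℝ≥0∞) ^ (1/p) ≠ ⊤ :=
    ENNReal.rpow_ne_top_of_nonneg (one_div_nonneg.mpr hp0.le) ENNReal.coe_ne_top
  have hfin := (ENNReal.mul_le_mul_iff_left hne0 hnetop).mp hCf2
  calc ((2:ℝ≥0∞) ^ q + (2:ℝ≥0∞) ^ (-q)) ^ (1/q)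
      = ((K : ℝ≥0) : ℝ≥0∞) ^ (1/q) := by rw [hK, Kcoe16]
    _ ≤ C := hfin

lemma nothc16 {p : ℝ} (hp : 1 < p) (e : ℕ → ℤ) (he1 : e 1 = -1) :
    ¬ ∃ f : V16 → ℝ, pnorm (mu16 e) p f ≠ ⊤ ∧
        ∀ g : V16 → ℝ, pnorm (mu16 e) p g ≠ ⊤ → ∀ ε : ℝ≥0∞, 0 < ε →
          ∃ n : ℕ, pnorm (mu16 e) p (fun w => (Bop E16)^[n] f w - g w) < ε := by
  have hp0 : (0:ℝ) < p := by linarith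
  rintro ⟨f, hf, hdense⟩
  set P := (pnorm (mu16 e) p f).toNNReal with hP
  have hPle : ∀ w, |f w * mu16 e w| ≤ (P:ℝ) := by
    intro w
    have h1 := le_pnorm16 hp0 (mu16 e) f w
    rw [← ENNReal.coe_toNNReal hf, ENNReal.coe_le_coe] at h1
    calc |f w * mu16 e w| = ‖f w * mu16 e w‖ := (Real.norm_eq_abs _).symm
      _ ≤ (P:ℝ) := h1
  set M : ℝ := (P:ℝ) + 2 with hM
  obtain ⟨n, hn⟩ := hdense (f16 M M) (pnorm_f16_ne_top hp0 _ M M) 1 (by norm_num)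
  have habs : ∀ x : ℝ, (‖x‖₊ : ℝ≥0∞) < 1 → |x| < 1 := by
    intro x hx
    rw [show (1:ℝ≥0∞) = ((1:ℝ≥0):ℝ≥0∞) from rfl, ENNReal.coe_lt_coe] at hx
    calc |x| = ‖x‖ := (Real.norm_eq_abs x).symm
      _ < ((1:ℝ≥0):ℝ) := hx
      _ = 1 := by norm_num
  -- coordinate at u 0
  have hu := habs _ ((le_pnorm16 hp0 (mu16 e) _ (V16.u 0)).trans_lt hn)
  have hv := habs _ ((le_pnorm16 hp0 (mu16 e) _ (V16.v 0)).trans_lt hn)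
  have hiu : (Bop E16)^[n] f (V16.u 0) = f (V16.u n) := by
    rw [iter_u16 n f 0, Nat.zero_add]
  have hiv : (Bop E16)^[n] f (V16.v 0) = f (V16.v n) := by
    rw [iter_v16 n f 0, Nat.zero_add]
  rw [hiu, mu16_u0 he1, show f16 M M (V16.u 0) = M from rfl] at hu
  rw [hiv, mu16_v0 he1, show f16 M M (V16.v 0) = M from rfl] at hv
  -- hu : |(f (u n) - M) * 2| < 1 ; hv : |(f (v n) - M) * 2⁻¹| < 1
  rw [abs_mul] at hu hv
  have hu2 : |f (V16.u n) - M| < 1 := by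
    have h2 : |(2:ℝ)| = 2 := by norm_num
    rw [h2] at hu
    nlinarith [abs_nonneg (f (V16.u n) - M)]
  have hv2 : |f (V16.v n) - M| < 2 := by
    have h2 : |(2:ℝ)⁻¹| = 2⁻¹ := by norm_num
    rw [h2] at hv
    nlinarith [abs_nonneg (f (V16.v n) - M)]
  have hun : f (V16.u n) > (P:ℝ) + 1 := by
    have := (abs_lt.mp hu2).1
    linarith
  have hvn : f (V16.v n) > (P:ℝ) := by
    have := (abs_lt.mp hv2).1
    linarith
  -- weighted bounds on f
  have hfu : |f (V16.u n)| * (2:ℝ) ^ (-e (n+1)) ≤ (P:ℝ) := by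
    have h1 := hPle (V16.u n)
    rw [show mu16 e (V16.u n) = (2:ℝ) ^ (-e (n+1)) from rfl, abs_mul,
      abs_of_pos (zpow_pos (by norm_num : (0:ℝ) < 2) _)] at h1
    exact h1
  have hfv : |f (V16.v n)| * (2:ℝ) ^ (e (n+1)) ≤ (P:ℝ) := by
    have h1 := hPle (V16.v n)
    rw [show mu16 e (V16.v n) = (2:ℝ) ^ (e (n+1)) from rfl, abs_mul,
      abs_of_pos (zpow_pos (by norm_num : (0:ℝ) < 2) _)] at h1
    exact h1
  rcases le_or_gt (e (n+1)) 0 with hle | hlt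
  · have h1 : (1:ℝ) ≤ (2:ℝ) ^ (-e (n+1)) := one_le_zpow₀ (by norm_num) (by omega)
    have h2 : |f (V16.u n)| ≤ (P:ℝ) := by
      nlinarith [abs_nonneg (f (V16.u n))]
    have h3 := le_abs_self (f (V16.u n))
    linarith
  · have h1 : (1:ℝ) ≤ (2:ℝ) ^ (e (n+1)) := one_le_zpow₀ (by norm_num) (by omega)
    have h2 : |f (V16.v n)| ≤ (P:ℝ) := by
      nlinarith [abs_nonneg (f (V16.v n))]
    have h3 := le_abs_self (f (V16.v n))
    linarith

/-- Example: on the rooted tree with two branches and the block-defined weight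
`(μ_{v_k})` (with `μ_{u_k} = 1/μ_{v_k}`), the backward shift `B` is bounded on
`ℓ^p(V,μ)` with `‖B‖ = (2^{p*} + 2^{-p*})^{1/p*}`, the return-time sets
`{n : 1/|μ_{v_{k+n}}| > N}` and `{n : 1/|μ_{u_{k+n}}| > N}` are disjoint, and
`B` is not hypercyclic. -/
theorem stmt16 (p : ℝ) (hp : 1 < p)
    (m : ℕ → ℕ) (hmpos : ∀ k, 1 ≤ k → 0 < m k) (hmmono : ∀ k, 1 ≤ k → m k < m (k + 1))
    (b : ℕ → ℕ) (hb0 : b 0 = 0) (hb : ∀ j, b (j + 1) = b j + 2 * m (j + 1))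
    (e : ℕ → ℤ)
    (he : ∀ j i : ℕ, 1 ≤ i → i ≤ m (j + 1) →
      e (b j + i) = (if Even j then (-1 : ℤ) else 1) * (i : ℤ) ∧
      e (b j + m (j + 1) + i) = (if Even j then (-1 : ℤ) else 1) * ((m (j + 1) : ℤ) - (i : ℤ))) :
    ((∃ C : ℝ≥0∞, C ≠ ⊤ ∧
        ∀ f : V16 → ℝ, pnorm (mu16 e) p (Bop E16 f) ≤ C * pnorm (mu16 e) p f) ∧
      sInf {C : ℝ≥0∞ |
          ∀ f : V16 → ℝ, pnorm (mu16 e) p (Bop E16 f) ≤ C * pnorm (mu16 e) p f}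
        = ((2 : ℝ≥0∞) ^ (p / (p - 1)) + (2 : ℝ≥0∞) ^ (-(p / (p - 1)))) ^ (1 / (p / (p - 1)))) ∧
    (∀ k N : ℕ, 1 ≤ k → 1 ≤ N →
      {n : ℕ | (N : ℝ) < 1 / |mu16 e (V16.v (k + n - 1))|} ∩
        {n : ℕ | (N : ℝ) < 1 / |mu16 e (V16.u (k + n - 1))|} = ∅) ∧
    ¬ ∃ f : V16 → ℝ, pnorm (mu16 e) p f ≠ ⊤ ∧
        ∀ g : V16 → ℝ, pnorm (mu16 e) p g ≠ ⊤ → ∀ ε : ℝ≥0∞, 0 < ε →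
          ∃ n : ℕ, pnorm (mu16 e) p (fun w => (Bop E16)^[n] f w - g w) < ε := by
  have hpq : p.HolderConjugate (p / (p - 1)) := Real.HolderConjugate.conjExponent hp
  have he1 : e 1 = -1 := e16_one m b e hmpos hb0 he
  have hstep := e16_step m b e hmpos hb0 hb he
  set q : ℝ := p / (p - 1) with hqdef
  have hq0 : 0 < q := hpq.symm.pos
  refine ⟨⟨⟨((2:ℝ≥0∞) ^ q + (2:ℝ≥0∞) ^ (-q)) ^ (1/q), ?_, fun f => bound16 hpq e he1 hstep f⟩, ?_⟩,
    ?_, nothc16 hp e he1⟩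
  · -- C ≠ ⊤
    refine ENNReal.rpow_ne_top_of_nonneg (one_div_nonneg.mpr hq0.le) ?_
    rw [← Kcoe16 q]
    exact ENNReal.coe_ne_top
  · -- sInf
    apply le_antisymm
    · exact sInf_le (fun f => bound16 hpq e he1 hstep f)
    · exact le_sInf (fun C hC => lower16 hpq e he1 hC)
  · -- disjoint return sets
    intro k N hk hN
    ext n
    simp only [Set.mem_inter_iff, Set.mem_setOf_eq, Set.mem_empty_iff_false, iff_false, not_and]
    intro h1 h2
    have hidx : k + n - 1 + 1 = k + n := by omega
    have hmv : mu16 e (V16.v (k + n - 1)) = (2:ℝ) ^ (e (k + n)) := by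
      show (2:ℝ) ^ (e (k + n - 1 + 1)) = _
      rw [hidx]
    have hmu : mu16 e (V16.u (k + n - 1)) = (2:ℝ) ^ (-e (k + n)) := by
      show (2:ℝ) ^ (-e (k + n - 1 + 1)) = _
      rw [hidx]
    rw [hmv, abs_of_pos (zpow_pos (by norm_num : (0:ℝ) < 2) _)] at h1
    rw [hmu, abs_of_pos (zpow_pos (by norm_num : (0:ℝ) < 2) _)] at h2
    have hN1 : (1:ℝ) ≤ (N:ℝ) := by exact_mod_cast hN
    set E := e (k + n) with hE
    have hx : (0:ℝ) < (2:ℝ) ^ E := zpow_pos (by norm_num) _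
    have hy : (0:ℝ) < (2:ℝ) ^ (-E) := zpow_pos (by norm_num) _
    have hxy : (2:ℝ) ^ E * (2:ℝ) ^ (-E) = 1 := by
      rw [← zpow_add₀ (by norm_num : (2:ℝ) ≠ 0)]
      simp
    -- h1 : N < 1 / 2^E, h2 : N < 1 / 2^(-E)
    have hA : (N:ℝ) * (2:ℝ) ^ E < 1 := by
      rw [lt_div_iff₀ hx] at h1
      linarith
    have hB : (N:ℝ) * (2:ℝ) ^ (-E) < 1 := by
      rw [lt_div_iff₀ hy] at h2
      linarith
    nlinarith [mul_pos hx hy]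
end

section
/- Let $X$ be an infinite-dimensional Banach space, $T$ a bounded linear operator on $X$, and $\Gamma\subset\mathbb{C}$ with $\Gamma\setminus\{0\}\neq\emptyset$. Suppose there exist an increasing sequence $(n_k)$ of positive integers, a sequence $(\lambda_k)$ in $\Gamma\setminus\{0\}$, dense subsets $X_0,Y_0\subset X$, and maps $I_{n_k}:X_0\to X$, $S_{n_k}:Y_0\to X$ such that for all $x\in X_0$, $y\in Y_0$: $I_{n_k}x\to x$, $\lambda_k T^{n_k}I_{n_k}x\to 0$, $\lambda_k^{-1}S_{n_k}y\to 0$, and $T^{n_k}S_{n_k}y\to y$. Then for all nonempty open $U_1,U_2,V_1,V_2\subset X$ there exist $k$, $z_1\in U_1$, $z_2\in U_2$ with $(\lambda_k T^{n_k}z_1,\lambda_k T^{n_k}z_2)\in V_1\times V_2$. -/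
open Set Filter

/-- The key transitivity step of the `Γ`-supercyclicity criterion: under the
hypotheses of the criterion, for all nonempty open `U₁, U₂, V₁, V₂` there are
`k` and `z₁ ∈ U₁`, `z₂ ∈ U₂` with `(λ_k T^{n_k} z₁, λ_k T^{n_k} z₂) ∈ V₁ × V₂`. -/
theorem stmt18 {X : Type*} [NormedAddCommGroup X] [NormedSpace ℂ X] [CompleteSpace X]
    (hdim : ¬ FiniteDimensional ℂ X)
    (T : X →L[ℂ] X) (Γ : Set ℂ) (hΓ : (Γ \ {0}).Nonempty)
    (n : ℕ → ℕ) (hn : StrictMono n) (hnpos : ∀ k, 0 < n k)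
    (lam : ℕ → ℂ) (hlam : ∀ k, lam k ∈ Γ \ {0})
    (X₀ Y₀ : Set X) (hX₀ : Dense X₀) (hY₀ : Dense Y₀)
    (I S : ℕ → X → X)
    (hI : ∀ x ∈ X₀, Tendsto (fun k => I k x) atTop (nhds x))
    (hTI : ∀ x ∈ X₀, Tendsto (fun k => lam k • (T ^ n k) (I k x)) atTop (nhds 0))
    (hS : ∀ y ∈ Y₀, Tendsto (fun k => (lam k)⁻¹ • S k y) atTop (nhds 0))
    (hTS : ∀ y ∈ Y₀, Tendsto (fun k => (T ^ n k) (S k y)) atTop (nhds y)) :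
    ∀ U₁ U₂ V₁ V₂ : Set X,
      IsOpen U₁ → U₁.Nonempty → IsOpen U₂ → U₂.Nonempty →
      IsOpen V₁ → V₁.Nonempty → IsOpen V₂ → V₂.Nonempty →
      ∃ k : ℕ, ∃ z₁ ∈ U₁, ∃ z₂ ∈ U₂,
        lam k • (T ^ n k) z₁ ∈ V₁ ∧ lam k • (T ^ n k) z₂ ∈ V₂ := by
  intro U₁ U₂ V₁ V₂ hU₁ hU₁n hU₂ hU₂n hV₁ hV₁n hV₂ hV₂n
  obtain ⟨x₁, hx₁U, hx₁X⟩ := hX₀.inter_open_nonempty U₁ hU₁ hU₁n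
  obtain ⟨x₂, hx₂U, hx₂X⟩ := hX₀.inter_open_nonempty U₂ hU₂ hU₂n
  obtain ⟨y₁, hy₁V, hy₁Y⟩ := hY₀.inter_open_nonempty V₁ hV₁ hV₁n
  obtain ⟨y₂, hy₂V, hy₂Y⟩ := hY₀.inter_open_nonempty V₂ hV₂ hV₂n
  -- z_i k = I k x_i + (lam k)⁻¹ • S k y_i
  have hz : ∀ (x : X) (y : X), x ∈ X₀ → y ∈ Y₀ →
      Tendsto (fun k => I k x + (lam k)⁻¹ • S k y) atTop (nhds x) := by
    intro x y hx hy
    simpa using (hI x hx).add (hS y hy)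
  have hlamne : ∀ k, lam k ≠ 0 := fun k => (hlam k).2
  have hTz : ∀ (x : X) (y : X), x ∈ X₀ → y ∈ Y₀ →
      Tendsto (fun k => lam k • (T ^ n k) (I k x + (lam k)⁻¹ • S k y)) atTop (nhds y) := by
    intro x y hx hy
    have : (fun k => lam k • (T ^ n k) (I k x + (lam k)⁻¹ • S k y))
        = fun k => lam k • (T ^ n k) (I k x) + (T ^ n k) (S k y) := by
      funext k
      rw [map_add, smul_add, map_smul, smul_smul, mul_inv_cancel₀ (hlamne k), one_smul]
    rw [this]
    simpa using (hTI x hx).add (hTS y hy)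
  have h1 := ((hz x₁ y₁ hx₁X hy₁Y).eventually (hU₁.mem_nhds hx₁U)).and
    ((hTz x₁ y₁ hx₁X hy₁Y).eventually (hV₁.mem_nhds hy₁V))
  have h2 := ((hz x₂ y₂ hx₂X hy₂Y).eventually (hU₂.mem_nhds hx₂U)).and
    ((hTz x₂ y₂ hx₂X hy₂Y).eventually (hV₂.mem_nhds hy₂V))
  obtain ⟨k, ⟨hk1, hk1'⟩, ⟨hk2, hk2'⟩⟩ := (h1.and h2).exists
  exact ⟨k, _, hk1, _, hk2, hk1', hk2'⟩
end
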